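/- arXiv:1107.0453 — 6 statements merged into one kernel-verified Lean document; each statement's English description precedes it below -/
import Mathlib

section
/- Let T : A → B be a positive linear map between finite-dimensional C*-algebras. The following are equivalent: (i) T(ρ) is invertible for every positive invertible ρ ∈ A; (ii) T(ρ) is invertible for some positive invertible ρ ∈ A; (iii) the adjoint T* (with respect to the Hilbert–Schmidt inner product) is faithful, i.e., T*(a) = 0 for a ≥ 0 implies a = 0. -/
open Matrix ComplexOrder

section Aux

variable {m : Type*} [Fintype m] [DecidableEq m]

private lemma aux_trace_cts_nonneg {n : Type*} [Fintype n] (C : Matrix m n ℂ) :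
    0 ≤ (Cᴴ * C).trace := by
  rw [Matrix.trace]
  refine Finset.sum_nonneg fun j _ => ?_
  rw [Matrix.diag_apply, Matrix.mul_apply]
  refine Finset.sum_nonneg fun i _ => ?_
  rw [Matrix.conjTranspose_apply]
  exact star_mul_self_nonneg _

private lemma aux_eq_zero_of_trace_cts {n : Type*} [Fintype n] (C : Matrix m n ℂ)
    (h : (Cᴴ * C).trace = 0) : C = 0 := by
  ext i j
  rw [Matrix.trace] at h
  have hnn : ∀ k (hk : k ∈ (Finset.univ : Finset n)), (0:ℂ) ≤ (Cᴴ * C).diag k := by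
    intro k _
    rw [Matrix.diag_apply, Matrix.mul_apply]
    refine Finset.sum_nonneg fun i _ => ?_
    rw [Matrix.conjTranspose_apply]
    exact star_mul_self_nonneg _
  have h2 := (Finset.sum_eq_zero_iff_of_nonneg hnn).mp h j (Finset.mem_univ j)
  rw [Matrix.diag_apply, Matrix.mul_apply] at h2
  have hnn2 : ∀ k (hk : k ∈ (Finset.univ : Finset m)), (0:ℂ) ≤ Cᴴ j k * C k j := by
    intro k _
    rw [Matrix.conjTranspose_apply]
    exact star_mul_self_nonneg _
  have h3 := (Finset.sum_eq_zero_iff_of_nonneg hnn2).mp h2 i (Finset.mem_univ i)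
  rw [Matrix.conjTranspose_apply] at h3
  rcases mul_eq_zero.mp h3 with h4 | h4
  · simpa using star_eq_zero.mp h4
  · simpa using h4

open scoped MatrixOrder in
private lemma aux_sqrt {M : Matrix m m ℂ} (hM : M.PosSemidef) :
    ∃ S : Matrix m m ℂ, Sᴴ = S ∧ S * S = M := by
  obtain ⟨X, hX, -, hXX⟩ := CFC.exists_sqrt_of_isSelfAdjoint_of_quasispectrumRestricts
    hM.isHermitian (QuasispectrumRestricts.nnreal_of_nonneg hM.nonneg)
  exact ⟨X, hX.star_eq, hXX⟩

private lemma aux_psd_exists {M : Matrix m m ℂ} (hM : M.PosSemidef) :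
    ∃ A : Matrix m m ℂ, M = Aᴴ * A := by
  obtain ⟨S, hS, hSS⟩ := aux_sqrt hM
  exact ⟨S, by rw [hS, hSS]⟩

private lemma aux_trace_mul_nonneg {M N : Matrix m m ℂ} (hM : M.PosSemidef)
    (hN : N.PosSemidef) : 0 ≤ (M * N).trace := by
  obtain ⟨A, rfl⟩ := aux_psd_exists hM
  obtain ⟨B, rfl⟩ := aux_psd_exists hN
  have key : (Aᴴ * A * (Bᴴ * B)).trace = ((A * Bᴴ)ᴴ * (A * Bᴴ)).trace := by
    calc (Aᴴ * A * (Bᴴ * B)).trace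
        = ((Aᴴ * (A * Bᴴ)) * B).trace := by simp only [Matrix.mul_assoc]
      _ = (B * (Aᴴ * (A * Bᴴ))).trace := trace_mul_comm _ _
      _ = ((B * Aᴴ) * (A * Bᴴ)).trace := by simp only [Matrix.mul_assoc]
      _ = ((A * Bᴴ)ᴴ * (A * Bᴴ)).trace := by
          rw [conjTranspose_mul, conjTranspose_conjTranspose]
  rw [key]
  exact aux_trace_cts_nonneg _

private lemma aux_psd_eq_zero_of_trace {M N : Matrix m m ℂ} (hM : M.PosDef)
    (hN : N.PosSemidef) (h : (M * N).trace = 0) : N = 0 := by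
  obtain ⟨B, rfl⟩ := aux_psd_exists hN
  have hMps := hM.posSemidef
  obtain ⟨S, hherm, hsq⟩ := aux_sqrt hMps
  have key : ((S * Bᴴ)ᴴ * (S * Bᴴ)).trace = (M * (Bᴴ * B)).trace := by
    rw [conjTranspose_mul, hherm, conjTranspose_conjTranspose, ← hsq]
    calc ((B * S) * (S * Bᴴ)).trace
        = ((B * (S * S)) * Bᴴ).trace := by simp only [Matrix.mul_assoc]
      _ = ((S * S) * (Bᴴ * B)).trace := by
          rw [trace_mul_cycle, trace_mul_comm, Matrix.mul_assoc]
  have hzero : S * Bᴴ = 0 := aux_eq_zero_of_trace_cts _ (by rw [key, h])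
  have hMB : M * Bᴴ = 0 := by rw [← hsq, Matrix.mul_assoc, hzero, Matrix.mul_zero]
  have hdet : IsUnit M.det := isUnit_iff_ne_zero.mpr hM.det_pos.ne'
  have hB : Bᴴ = 0 := by
    have := congrArg (M⁻¹ * ·) hMB
    simpa [← Matrix.mul_assoc, Matrix.nonsing_inv_mul M hdet] using this
  have : B = 0 := by simpa using congrArg conjTranspose hB
  rw [this, conjTranspose_zero, Matrix.mul_zero]

private lemma aux_trace_vecMulVec_mul (x : m → ℂ) (M : Matrix m m ℂ) :
    ((vecMulVec x (star x)) * M).trace = star x ⬝ᵥ M *ᵥ x := by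
  simp only [Matrix.trace, Matrix.diag_apply, Matrix.mul_apply, vecMulVec_apply,
    dotProduct, mulVec, Pi.star_apply]
  rw [Finset.sum_comm]
  refine Finset.sum_congr rfl fun j _ => ?_
  rw [Finset.mul_sum]
  exact Finset.sum_congr rfl fun i _ => by ring

private lemma aux_posSemidef_vecMulVec (x : m → ℂ) :
    (vecMulVec x (star x)).PosSemidef := by
  have : vecMulVec x (star x) = (replicateRow (Fin 1) (star x))ᴴ * (replicateRow (Fin 1) (star x)) := by
    ext i j
    simp [vecMulVec_apply, Matrix.mul_apply, conjTranspose_apply, replicateRow_apply]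
  rw [this]
  exact posSemidef_conjTranspose_mul_self _

private lemma aux_eq_zero_of_forall_quad (M : Matrix m m ℂ)
    (h : ∀ x : m → ℂ, star x ⬝ᵥ M *ᵥ x = 0) : M = 0 := by
  have h2 : ∀ x : EuclideanSpace ℂ m, (inner ℂ ((Matrix.toEuclideanLin M) x) x : ℂ) = 0 := by
    intro x
    rw [← inner_conj_symm]
    have : (inner ℂ x ((Matrix.toEuclideanLin M) x) : ℂ)
        = star ((WithLp.equiv 2 (m → ℂ)) x) ⬝ᵥ (M *ᵥ (WithLp.equiv 2 (m → ℂ)) x) := by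
      rw [EuclideanSpace.inner_eq_star_dotProduct, dotProduct_comm]
      rfl
    rw [this, h, map_zero]
  have h3 : Matrix.toEuclideanLin M = 0 := (inner_map_self_eq_zero _).mp h2
  exact (LinearEquiv.map_eq_zero_iff _).mp h3

private lemma aux_isHermitian_of_quad_nonneg (M : Matrix m m ℂ)
    (h : ∀ x : m → ℂ, 0 ≤ star x ⬝ᵥ M *ᵥ x) : M.IsHermitian := by
  have hconj : ∀ x : m → ℂ, star x ⬝ᵥ Mᴴ *ᵥ x = star x ⬝ᵥ M *ᵥ x := by
    intro x
    have hreal : (starRingEnd ℂ) (star x ⬝ᵥ M *ᵥ x) = star x ⬝ᵥ M *ᵥ x := by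
      have := h x
      rw [Complex.le_def] at this
      rw [Complex.conj_eq_iff_im]
      exact this.2.symm
    rw [← hreal]
    simp only [dotProduct, mulVec, Pi.star_apply, map_sum, _root_.map_mul, conjTranspose_apply,
      Finset.mul_sum, Complex.conj_conj, RingHomCompTriple.comp_apply]
    rw [Finset.sum_comm]
    refine Finset.sum_congr rfl fun i _ => Finset.sum_congr rfl fun j _ => ?_
    simp only [Pi.star_apply, RCLike.star_def, Complex.conj_conj]
    ring
  have hsub : ∀ x : m → ℂ, star x ⬝ᵥ (Mᴴ - M) *ᵥ x = 0 := by
    intro x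
    rw [Matrix.sub_mulVec, dotProduct_sub, hconj, sub_self]
  have : Mᴴ - M = 0 := aux_eq_zero_of_forall_quad _ hsub
  exact sub_eq_zero.mp this

end Aux

/-- For a positive linear map `T` between matrix algebras with
Hilbert–Schmidt adjoint `Tstar`, the following are equivalent:
(i) `T ρ` is invertible for every positive invertible `ρ`;
(ii) `T ρ` is invertible for some positive invertible `ρ`;
(iii) `Tstar` is faithful. -/
theorem stmt0 {n m : Type*} [Fintype n] [DecidableEq n] [Fintype m] [DecidableEq m]
    (T : Matrix n n ℂ →ₗ[ℂ] Matrix m m ℂ) (Tstar : Matrix m m ℂ →ₗ[ℂ] Matrix n n ℂ)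
    (hpos : ∀ a : Matrix n n ℂ, a.PosSemidef → (T a).PosSemidef)
    (hadj : ∀ (a : Matrix n n ℂ) (b : Matrix m m ℂ),
      ((T a)ᴴ * b).trace = (aᴴ * Tstar b).trace) :
    ((∀ ρ : Matrix n n ℂ, ρ.PosDef → IsUnit (T ρ)) ↔
      (∀ b : Matrix m m ℂ, b.PosSemidef → Tstar b = 0 → b = 0)) ∧
    ((∃ ρ : Matrix n n ℂ, ρ.PosDef ∧ IsUnit (T ρ)) ↔
      (∀ b : Matrix m m ℂ, b.PosSemidef → Tstar b = 0 → b = 0)) := by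
  -- Tstar is a positive map
  have hTs : ∀ b : Matrix m m ℂ, b.PosSemidef → (Tstar b).PosSemidef := by
    intro b hb
    have hquad : ∀ x : n → ℂ, star x ⬝ᵥ (Tstar b) *ᵥ x
        = ((T (vecMulVec x (star x))) * b).trace := by
      intro x
      rw [← aux_trace_vecMulVec_mul]
      rw [← (hpos _ (aux_posSemidef_vecMulVec x)).isHermitian.eq, hadj,
        (aux_posSemidef_vecMulVec x).isHermitian.eq]
    have hnn : ∀ x : n → ℂ, 0 ≤ star x ⬝ᵥ (Tstar b) *ᵥ x := by
      intro x
      rw [hquad x]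
      exact aux_trace_mul_nonneg (hpos _ (aux_posSemidef_vecMulVec x)) hb
    exact PosSemidef.of_dotProduct_mulVec_nonneg (aux_isHermitian_of_quad_nonneg _ hnn) hnn
  -- (∃) → faithful
  have h₁ : (∃ ρ : Matrix n n ℂ, ρ.PosDef ∧ IsUnit (T ρ)) →
      (∀ b : Matrix m m ℂ, b.PosSemidef → Tstar b = 0 → b = 0) := by
    rintro ⟨ρ, hρ, hu⟩ b hb h0
    have hps := hpos ρ hρ.posSemidef
    have hTρ : (T ρ).PosDef := by
      refine PosDef.of_dotProduct_mulVec_pos hps.isHermitian fun x hx => ?_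
      rcases lt_or_eq_of_le (hps.dotProduct_mulVec_nonneg x) with hlt | heq
      · exact hlt
      · exfalso
        have hmv : (T ρ) *ᵥ x = 0 := (hps.dotProduct_mulVec_zero_iff x).mp heq.symm
        have hdet : (T ρ).det = 0 := Matrix.exists_mulVec_eq_zero_iff.mp ⟨x, hx, hmv⟩
        exact isUnit_iff_ne_zero.mp ((Matrix.isUnit_iff_isUnit_det _).mp hu) hdet
    have htr : ((T ρ) * b).trace = 0 := by
      calc ((T ρ) * b).trace = ((T ρ)ᴴ * b).trace := by rw [hps.isHermitian.eq]
        _ = (ρᴴ * Tstar b).trace := hadj ρ b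
        _ = 0 := by rw [h0, Matrix.mul_zero, trace_zero]
    exact aux_psd_eq_zero_of_trace hTρ hb htr
  -- faithful → (∀)
  have h₂ : (∀ b : Matrix m m ℂ, b.PosSemidef → Tstar b = 0 → b = 0) →
      (∀ ρ : Matrix n n ℂ, ρ.PosDef → IsUnit (T ρ)) := by
    intro hf ρ hρ
    by_contra hu
    have hps := hpos ρ hρ.posSemidef
    have hdet : (T ρ).det = 0 := by
      by_contra hd
      exact hu ((Matrix.isUnit_iff_isUnit_det _).mpr (isUnit_iff_ne_zero.mpr hd))
    obtain ⟨v, hvne, hv⟩ := Matrix.exists_mulVec_eq_zero_iff.mpr hdet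
    have hbps := aux_posSemidef_vecMulVec v
    have htr : (ρ * Tstar (vecMulVec v (star v))).trace = 0 := by
      rw [← hρ.isHermitian.eq, ← hadj, hps.isHermitian.eq, trace_mul_comm,
        aux_trace_vecMulVec_mul, hv, dotProduct_zero]
    have hTb0 : Tstar (vecMulVec v (star v)) = 0 :=
      aux_psd_eq_zero_of_trace hρ (hTs _ hbps) htr
    have hb0 := hf _ hbps hTb0
    obtain ⟨i, hi⟩ : ∃ i, v i ≠ 0 := by
      by_contra hall
      push_neg at hall
      exact hvne (funext hall)
    have hent := congrFun (congrFun hb0 i) i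
    rw [vecMulVec_apply] at hent
    rcases mul_eq_zero.mp hent with h4 | h4
    · exact hi h4
    · exact hi (star_eq_zero.mp h4)
  exact ⟨⟨fun h => h₁ ⟨1, Matrix.PosDef.one, h 1 Matrix.PosDef.one⟩, h₂⟩,
    ⟨h₁, fun h => ⟨1, Matrix.PosDef.one, h₂ h 1 Matrix.PosDef.one⟩⟩⟩
end

section
/- Let T : A → B be a positive linear map with T* unital (T*(I) = I), ρ ∈ A positive, p = supp ρ and p₀ = supp T(ρ). Then T*(p₀) ≥ p. -/
set_option maxHeartbeats 1000000


open Matrix ComplexOrder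

/-- `p` is the support projection of the positive operator `a`:
the smallest (in the Loewner order) Hermitian idempotent `p` with `a * p = a`. -/
def IsSuppProj {n : Type*} [Fintype n] (a p : Matrix n n ℂ) : Prop :=
  p.IsHermitian ∧ p * p = p ∧ a * p = a ∧
  ∀ q : Matrix n n ℂ, q.IsHermitian → q * q = q → a * q = a → (q - p).PosSemidef

namespace Stmt4Aux
variable {n : Type*} [Fintype n] [DecidableEq n]

lemma eq_zero_of_trace_ct_mul_self {A : Matrix n n ℂ} (h : (Aᴴ * A).trace = 0) : A = 0 := by
  have h1 : (∑ i, ∑ k, (Complex.normSq (A k i) : ℂ)) = 0 := by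
    rw [← h]
    simp only [Matrix.trace, Matrix.diag, Matrix.mul_apply, Matrix.conjTranspose_apply,
      Complex.normSq_eq_conj_mul_self, RCLike.star_def]
  have h2 : (∑ i, ∑ k, Complex.normSq (A k i)) = 0 := by exact_mod_cast h1
  have h3 : ∀ i k, Complex.normSq (A k i) = 0 := by
    intro i k
    have := (Finset.sum_eq_zero_iff_of_nonneg (fun i _ =>
      Finset.sum_nonneg fun k _ => Complex.normSq_nonneg _)).mp h2 i (Finset.mem_univ i)
    exact (Finset.sum_eq_zero_iff_of_nonneg (fun k _ => Complex.normSq_nonneg _)).mp this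
      k (Finset.mem_univ k)
  ext k i
  exact Complex.normSq_eq_zero.mp (h3 i k)

open scoped MatrixOrder in
lemma exists_sqrt {A : Matrix n n ℂ} (hA : A.PosSemidef) :
    ∃ S : Matrix n n ℂ, S.PosSemidef ∧ S * S = A :=
  ⟨CFC.sqrt A, Matrix.nonneg_iff_posSemidef.mp (CFC.sqrt_nonneg A),
    CFC.sqrt_mul_sqrt_self A hA.nonneg⟩

lemma psd_trace_nonneg {M : Matrix n n ℂ} (hM : M.PosSemidef) : 0 ≤ M.trace := by
  refine Finset.sum_nonneg fun i _ => ?_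
  simpa [Matrix.mulVec_single, dotProduct, Pi.single_apply, Finset.sum_ite_eq]
    using hM.dotProduct_mulVec_nonneg (Pi.single i 1)

lemma psd_trace_mul_nonneg {A B : Matrix n n ℂ} (hA : A.PosSemidef) (hB : B.PosSemidef) :
    0 ≤ (A * B).trace := by
  obtain ⟨C, rfl⟩ : ∃ C : Matrix n n ℂ, B = Cᴴ * C := by
    obtain ⟨S, hS, hSS⟩ := exists_sqrt hB
    exact ⟨S, by rw [hS.1.eq, hSS]⟩
  have : (A * (Cᴴ * C)).trace = (C * A * Cᴴ).trace := by
    rw [← Matrix.mul_assoc, Matrix.trace_mul_comm (A * Cᴴ) C, Matrix.mul_assoc,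
      ← Matrix.mul_assoc]
  rw [this]
  exact psd_trace_nonneg (hA.mul_mul_conjTranspose_same C)


lemma herm_diff {A : Matrix n n ℂ} (hA : A.IsHermitian) :
    ∃ P Q : Matrix n n ℂ, P.PosSemidef ∧ Q.PosSemidef ∧ A = P - Q := by
  set U := (hA.eigenvectorUnitary : Matrix n n ℂ)
  refine ⟨U * Matrix.diagonal (fun i => ((max (hA.eigenvalues i) 0 : ℝ) : ℂ)) * star U,
    U * Matrix.diagonal (fun i => ((max (-hA.eigenvalues i) 0 : ℝ) : ℂ)) * star U, ?_, ?_, ?_⟩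
  · exact (Matrix.posSemidef_diagonal_iff.mpr fun i => by positivity).mul_mul_conjTranspose_same U
  · exact (Matrix.posSemidef_diagonal_iff.mpr fun i => by positivity).mul_mul_conjTranspose_same U
  · conv_lhs => rw [hA.spectral_theorem, Unitary.conjStarAlgAut_apply]
    rw [← Matrix.sub_mul, ← Matrix.mul_sub, Matrix.diagonal_sub]
    have hfg : (RCLike.ofReal ∘ hA.eigenvalues : n → ℂ) =
        fun i => ((max (hA.eigenvalues i) 0 : ℝ) : ℂ) - ((max (-hA.eigenvalues i) 0 : ℝ) : ℂ) := by
      funext i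
      rw [Function.comp_apply]
      rcases le_or_gt 0 (hA.eigenvalues i) with h | h
      · rw [max_eq_left h, max_eq_right (neg_nonpos.mpr h)]; push_cast; simp
      · rw [max_eq_right h.le, max_eq_left (neg_nonneg.mpr h.le)]; push_cast; simp
    rw [hfg]

variable {m : Type*} [Fintype m] [DecidableEq m]

lemma map_herm (T : Matrix n n ℂ →ₗ[ℂ] Matrix m m ℂ)
    (hpos : ∀ a : Matrix n n ℂ, a.PosSemidef → (T a).PosSemidef)
    {a : Matrix n n ℂ} (ha : a.IsHermitian) : (T a).IsHermitian := by
  obtain ⟨P, Q, hP, hQ, rfl⟩ := herm_diff ha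
  rw [map_sub]
  exact (hP |> hpos P).1.sub (hQ |> hpos Q).1

lemma map_star (T : Matrix n n ℂ →ₗ[ℂ] Matrix m m ℂ)
    (hpos : ∀ a : Matrix n n ℂ, a.PosSemidef → (T a).PosSemidef)
    (a : Matrix n n ℂ) : T aᴴ = (T a)ᴴ := by
  have hh : (a + aᴴ).IsHermitian := by
    unfold Matrix.IsHermitian
    rw [conjTranspose_add, conjTranspose_conjTranspose, add_comm]
  have hk : ((Complex.I : ℂ) • (a - aᴴ)).IsHermitian := by
    unfold Matrix.IsHermitian
    rw [conjTranspose_smul, conjTranspose_sub, conjTranspose_conjTranspose]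
    simp only [Complex.star_def, Complex.conj_I]
    module
  have h1 : (T (a + aᴴ)).IsHermitian := map_herm T hpos hh
  have h2 : (T ((Complex.I : ℂ) • (a - aᴴ))).IsHermitian := map_herm T hpos hk
  have hI : (-Complex.I : ℂ) * Complex.I = 1 := by simp [Complex.I_mul_I]
  have key : a = (1/2 : ℂ) • ((a + aᴴ) + (-Complex.I : ℂ) • ((Complex.I : ℂ) • (a - aᴴ))) := by
    rw [smul_smul, hI, one_smul]
    module
  have key2 : aᴴ = (1/2 : ℂ) • ((a + aᴴ) - (-Complex.I : ℂ) • ((Complex.I : ℂ) • (a - aᴴ))) := by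
    rw [smul_smul, hI, one_smul]
    module
  have e1 : T aᴴ = (1/2 : ℂ) • (T (a + aᴴ) - (-Complex.I : ℂ) • T ((Complex.I : ℂ) • (a - aᴴ))) := by
    conv_lhs => rw [key2]
    rw [LinearMap.map_smul, LinearMap.map_sub, LinearMap.map_smul]
  have e2 : T a = (1/2 : ℂ) • (T (a + aᴴ) + (-Complex.I : ℂ) • T ((Complex.I : ℂ) • (a - aᴴ))) := by
    conv_lhs => rw [key]
    rw [LinearMap.map_smul, LinearMap.map_add, LinearMap.map_smul]
  rw [e1, e2, conjTranspose_smul, conjTranspose_add, conjTranspose_smul, h1.eq, h2.eq]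
  simp only [Complex.star_def, Complex.conj_I, map_neg, map_div₀, _root_.map_one,
    map_ofNat, neg_neg]
  module

lemma adj_herm (T : Matrix n n ℂ →ₗ[ℂ] Matrix m m ℂ) (Tstar : Matrix m m ℂ →ₗ[ℂ] Matrix n n ℂ)
    (hpos : ∀ a : Matrix n n ℂ, a.PosSemidef → (T a).PosSemidef)
    (hadj : ∀ (a : Matrix n n ℂ) (b : Matrix m m ℂ),
      ((T a)ᴴ * b).trace = (aᴴ * Tstar b).trace)
    {b : Matrix m m ℂ} (hb : b.IsHermitian) : (Tstar b).IsHermitian := by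
  set M := Tstar b with hM
  set D := Mᴴ - M with hD
  have hDh : Dᴴ = -D := by rw [hD, conjTranspose_sub, conjTranspose_conjTranspose, neg_sub]
  have t1 : (Dᴴ * M).trace = ((T D)ᴴ * b).trace := (hadj D b).symm
  have t2 : (D * M).trace = (T D * b).trace := by
    have := hadj Dᴴ b
    rw [conjTranspose_conjTranspose, map_star T hpos D, conjTranspose_conjTranspose] at this
    exact this.symm
  have t3 : (Dᴴ * Mᴴ).trace = ((T D)ᴴ * b).trace := by
    have : Dᴴ * Mᴴ = (M * D)ᴴ := by rw [conjTranspose_mul]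
    rw [this, trace_conjTranspose, trace_mul_comm M D, t2]
    rw [← trace_conjTranspose, conjTranspose_mul, hb.eq, trace_mul_comm]
  have key : (Dᴴ * D).trace = 0 := by
    calc (Dᴴ * D).trace = (Dᴴ * Mᴴ).trace - (Dᴴ * M).trace := by
          rw [← trace_sub, ← Matrix.mul_sub]
      _ = 0 := by rw [t1, t3, sub_self]
  have hD0 : D = 0 := eq_zero_of_trace_ct_mul_self key
  have : Mᴴ - M = 0 := hD0
  rw [Matrix.IsHermitian, ← sub_eq_zero]
  exact this

lemma adj_pos (T : Matrix n n ℂ →ₗ[ℂ] Matrix m m ℂ) (Tstar : Matrix m m ℂ →ₗ[ℂ] Matrix n n ℂ)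
    (hpos : ∀ a : Matrix n n ℂ, a.PosSemidef → (T a).PosSemidef)
    (hadj : ∀ (a : Matrix n n ℂ) (b : Matrix m m ℂ),
      ((T a)ᴴ * b).trace = (aᴴ * Tstar b).trace)
    {b : Matrix m m ℂ} (hb : b.PosSemidef) : (Tstar b).PosSemidef := by
  refine Matrix.PosSemidef.of_dotProduct_mulVec_nonneg (adj_herm T Tstar hpos hadj hb.1) fun x => ?_
  set a : Matrix n n ℂ := Matrix.vecMulVec x (star x) with ha
  have haPSD : a.PosSemidef := by
    rw [ha, show Matrix.vecMulVec x (star x) = (Matrix.replicateRow Unit (star x))ᴴ * Matrix.replicateRow Unit (star x) by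
      ext i j
      simp [Matrix.vecMulVec_apply, Matrix.mul_apply, Matrix.replicateRow_apply, mul_comm]]
    exact Matrix.posSemidef_conjTranspose_mul_self _
  have hq : star x ⬝ᵥ (Tstar b) *ᵥ x = (aᴴ * Tstar b).trace := by
    rw [haPSD.1.eq]
    simp only [Matrix.trace, Matrix.diag, Matrix.mul_apply, Matrix.vecMulVec_apply,
      dotProduct, Matrix.mulVec, dotProduct]
    rw [Finset.sum_comm]
    congr 1
    funext k
    rw [Finset.mul_sum]
    congr 1
    funext i
    simp only [ha, Matrix.vecMulVec_apply, Pi.star_apply]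
    ring
  rw [hq, ← hadj a b]
  have := hpos a haPSD
  rw [this.1.eq]
  exact psd_trace_mul_nonneg this hb

end Stmt4Aux

/-- If `T` is positive with unital adjoint `Tstar`, `p = supp ρ`,
`p₀ = supp T(ρ)`, then `Tstar p₀ ≥ p`. -/
theorem stmt4 {n m : Type*} [Fintype n] [DecidableEq n] [Fintype m] [DecidableEq m]
    (T : Matrix n n ℂ →ₗ[ℂ] Matrix m m ℂ) (Tstar : Matrix m m ℂ →ₗ[ℂ] Matrix n n ℂ)
    (hpos : ∀ a : Matrix n n ℂ, a.PosSemidef → (T a).PosSemidef)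
    (hadj : ∀ (a : Matrix n n ℂ) (b : Matrix m m ℂ),
      ((T a)ᴴ * b).trace = (aᴴ * Tstar b).trace)
    (hunital : Tstar 1 = 1)
    (ρ : Matrix n n ℂ) (hρ : ρ.PosSemidef)
    (p : Matrix n n ℂ) (hp : IsSuppProj ρ p)
    (p₀ : Matrix m m ℂ) (hp₀ : IsSuppProj (T ρ) p₀) :
    (Tstar p₀ - p).PosSemidef := by
  classical
  obtain ⟨hp₀h, hp₀i, hp₀s, -⟩ := hp₀
  have hTρ : (T ρ).PosSemidef := hpos ρ hρ
  -- p₀ and 1 - p₀ are PSD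
  have p₀psd : p₀.PosSemidef := by
    have : p₀ = p₀ᴴ * p₀ := by rw [hp₀h.eq, hp₀i]
    rw [this]; exact Matrix.posSemidef_conjTranspose_mul_self p₀
  have q₀psd : ((1 : Matrix m m ℂ) - p₀).PosSemidef := by
    have hherm : ((1 : Matrix m m ℂ) - p₀).IsHermitian := by
      unfold Matrix.IsHermitian
      rw [conjTranspose_sub, conjTranspose_one, hp₀h.eq]
    have hidem : ((1 : Matrix m m ℂ) - p₀) * ((1 : Matrix m m ℂ) - p₀) = 1 - p₀ := by
      rw [Matrix.mul_sub, Matrix.sub_mul, Matrix.sub_mul, hp₀i]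
      simp only [Matrix.one_mul, Matrix.mul_one]
      abel
    have : (1 : Matrix m m ℂ) - p₀ = ((1 : Matrix m m ℂ) - p₀)ᴴ * (1 - p₀) := by
      rw [hherm.eq, hidem]
    rw [this]; exact Matrix.posSemidef_conjTranspose_mul_self _
  set Y : Matrix n n ℂ := Tstar p₀ with hYdef
  have hY : Y.PosSemidef := Stmt4Aux.adj_pos T Tstar hpos hadj p₀psd
  set X : Matrix n n ℂ := 1 - Y with hXdef
  have hXeq : X = Tstar (1 - p₀) := by rw [hXdef, map_sub, hunital]
  have hX : X.PosSemidef := by rw [hXeq]; exact Stmt4Aux.adj_pos T Tstar hpos hadj q₀psd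
  -- trace (ρ * X) = 0
  have htr : (ρ * X).trace = 0 := by
    have h0 : T ρ * (1 - p₀) = 0 := by
      rw [Matrix.mul_sub, Matrix.mul_one, hp₀s, sub_self]
    have h1 := hadj ρ (1 - p₀)
    rw [hTρ.1.eq, h0, hρ.1.eq, ← hXeq, Matrix.trace_zero] at h1
    exact h1.symm
  -- ρ * X = 0
  have ρX0 : ρ * X = 0 := by
    obtain ⟨s, hsp, hs⟩ := Stmt4Aux.exists_sqrt hρ
    obtain ⟨t, htp, ht⟩ := Stmt4Aux.exists_sqrt hX
    have hsh : s.IsHermitian := hsp.1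
    have hth : t.IsHermitian := htp.1
    have hN : ((t * s)ᴴ * (t * s)).trace = 0 := by
      have e : (t * s)ᴴ * (t * s) = s * (X * s) := by
        rw [conjTranspose_mul, hsh.eq, hth.eq, Matrix.mul_assoc, ← Matrix.mul_assoc t t s, ht]
      rw [e, trace_mul_comm, Matrix.mul_assoc, hs, trace_mul_comm, htr]
    have hN0 : t * s = 0 := Stmt4Aux.eq_zero_of_trace_ct_mul_self hN
    have hXρ : X * ρ = 0 := by
      rw [← ht, ← hs, Matrix.mul_assoc, ← Matrix.mul_assoc t s s, hN0,
        Matrix.zero_mul, Matrix.mul_zero]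
    calc ρ * X = (X * ρ)ᴴ := by rw [conjTranspose_mul, hρ.1.eq, hX.1.eq]
      _ = 0 := by rw [hXρ, conjTranspose_zero]
  -- spectral decomposition of X
  have hXh : X.IsHermitian := hX.1
  set U : Matrix n n ℂ := (hXh.eigenvectorUnitary : Matrix n n ℂ) with hUdef
  set d : n → ℝ := hXh.eigenvalues with hddef
  have hspec : X = U * Matrix.diagonal (RCLike.ofReal ∘ d) * star U := hXh.spectral_theorem
  have hUU : star U * U = 1 := Matrix.UnitaryGroup.star_mul_self hXh.eigenvectorUnitary
  have hUU' : U * star U = 1 := hXh.eigenvectorUnitary.2.2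
  set ind : n → ℂ := fun i => if d i = 0 then 0 else 1 with hind
  set r : Matrix n n ℂ := U * Matrix.diagonal ind * star U with hr
  -- eigenvalue bounds
  have hd0 : ∀ i, 0 ≤ d i := hX.eigenvalues_nonneg
  have hd1 : ∀ i, d i ≤ 1 := by
    have hYd : star U * Y * U = Matrix.diagonal (fun i => 1 - ((d i : ℝ) : ℂ)) := by
      have hXU : star U * X * U = Matrix.diagonal (RCLike.ofReal ∘ d) := by
        rw [hspec]
        rw [Matrix.mul_assoc, Matrix.mul_assoc, hUU, Matrix.mul_one, ← Matrix.mul_assoc, hUU,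
          Matrix.one_mul]
      have hYX : Y = 1 - X := by rw [hXdef]; abel
      rw [hYX, Matrix.mul_sub, Matrix.sub_mul, Matrix.mul_one, hUU, hXU, ← Matrix.diagonal_one,
        Matrix.diagonal_sub]
      rfl
    have hpsd : (star U * Y * U).PosSemidef := by
      rw [Matrix.star_eq_conjTranspose]
      exact hY.conjTranspose_mul_mul_same U
    rw [hYd] at hpsd
    intro i
    have := Matrix.posSemidef_diagonal_iff.mp hpsd i
    have h2 : (0 : ℂ) ≤ ((1 - d i : ℝ) : ℂ) := by push_cast; convert this using 1
    rw [Complex.zero_le_real] at h2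
    linarith
  -- (r - X) is PSD
  have hrX : (r - X).PosSemidef := by
    have e : r - X = U * Matrix.diagonal (fun i => ind i - ((d i : ℝ) : ℂ)) * star U := by
      rw [hr]
      conv_lhs => rw [hspec]
      rw [← Matrix.diagonal_sub, ← Matrix.sub_mul, ← Matrix.mul_sub]
      rfl
    have hnn : ∀ i, (0 : ℂ) ≤ ind i - ((d i : ℝ) : ℂ) := by
      intro i
      by_cases h : d i = 0
      · simp [hind, h]
      · have : ind i = 1 := by simp [hind, h]
        rw [this, show (1 : ℂ) - ((d i : ℝ) : ℂ) = ((1 - d i : ℝ) : ℂ) by push_cast; ring,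
          Complex.zero_le_real]
        linarith [hd1 i]
    rw [e, Matrix.star_eq_conjTranspose]
    exact (Matrix.posSemidef_diagonal_iff.mpr hnn).mul_mul_conjTranspose_same U
  -- ρ * r = 0
  have hρr : ρ * r = 0 := by
    have e1 : ρ * (U * Matrix.diagonal (RCLike.ofReal ∘ d)) = 0 := by
      have e : ρ * X * U = 0 := by rw [ρX0, Matrix.zero_mul]
      rw [hspec] at e
      simp only [Matrix.mul_assoc] at e
      rw [hUU, Matrix.mul_one] at e
      exact e
    have e2 : ρ * U * Matrix.diagonal ind = 0 := by
      ext i j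
      have h1 : (ρ * U) i j * ((d j : ℝ) : ℂ) = 0 := by
        have := congrFun (congrFun e1 i) j
        rw [← Matrix.mul_assoc] at this
        simpa [Matrix.mul_diagonal] using this
      by_cases h : d j = 0
      · simp [Matrix.mul_diagonal, hind, h]
      · have h2 : (ρ * U) i j = 0 := by
          rcases mul_eq_zero.mp h1 with h' | h'
          · exact h'
          · exact absurd (by exact_mod_cast h') h
        simp [Matrix.mul_diagonal, h2]
    rw [hr, ← Matrix.mul_assoc, ← Matrix.mul_assoc, e2, Matrix.zero_mul]
  -- q := 1 - r is a projection fixing ρ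
  have hrherm : r.IsHermitian := by
    rw [hr]
    unfold Matrix.IsHermitian
    rw [conjTranspose_mul, conjTranspose_mul, Matrix.diagonal_conjTranspose,
      show (star U)ᴴ = U by rw [← Matrix.star_eq_conjTranspose, star_star],
      Matrix.star_eq_conjTranspose]
    have : star ind = ind := by
      funext i
      by_cases h : d i = 0 <;> simp [hind, h]
    rw [this, Matrix.mul_assoc]
  have hridem : r * r = r := by
    rw [hr]
    have : U * Matrix.diagonal ind * star U * (U * Matrix.diagonal ind * star U)
        = U * (Matrix.diagonal ind * Matrix.diagonal ind) * star U := by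
      simp only [Matrix.mul_assoc]
      rw [← Matrix.mul_assoc (star U) U, hUU, Matrix.one_mul]
    rw [this, Matrix.diagonal_mul_diagonal]
    have h2 : (fun i => ind i * ind i) = ind := by
      funext i; by_cases h : d i = 0 <;> simp [hind, h]
    rw [h2]
  have hqherm : ((1 : Matrix n n ℂ) - r).IsHermitian := by
    unfold Matrix.IsHermitian
    rw [conjTranspose_sub, conjTranspose_one, hrherm.eq]
  have hqidem : ((1 : Matrix n n ℂ) - r) * ((1 : Matrix n n ℂ) - r) = 1 - r := by
    rw [Matrix.mul_sub, Matrix.sub_mul, Matrix.sub_mul, hridem]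
    simp only [Matrix.one_mul, Matrix.mul_one]
    abel
  have hρq : ρ * ((1 : Matrix n n ℂ) - r) = ρ := by
    rw [Matrix.mul_sub, Matrix.mul_one, hρr, sub_zero]
  have hqp : (((1 : Matrix n n ℂ) - r) - p).PosSemidef := hp.2.2.2 _ hqherm hqidem hρq
  -- conclude
  have final : Tstar p₀ - p = (((1 : Matrix n n ℂ) - r) - p) + (r - X) := by
    rw [← hYdef, hXdef]
    abel
  rw [final]
  exact hqp.add hrX
end

section
/- Let a, b, c be n×n complex matrices with a, c Hermitian. The 2×2 block matrix M = [[a, b],[b*, c]] is positive semidefinite if and only if c ≥ 0, the limit b(c + εI)⁻¹b* as ε → 0⁺ exists (equivalently the range of b* is contained in the range of c, so bc⁻b* with c⁻ the generalized inverse is defined), and a ≥ b c⁻ b*. -/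
open Matrix ComplexOrder Filter Topology

namespace Stmt5Aux

variable {N : Type*} [Fintype N] [DecidableEq N]

lemma herm_conj (V : Matrix N N ℂ) (g : N → ℝ) :
    (V * diagonal (fun k => (g k : ℂ)) * Vᴴ).IsHermitian := by
  simp only [IsHermitian, conjTranspose_mul, diagonal_conjTranspose, mul_assoc,
    conjTranspose_conjTranspose]
  congr 1
  ext k l
  simp [diagonal_apply, apply_ite]

lemma entry_conj (V : Matrix N N ℂ) (g : N → ℝ) (i j : N) :
    (V * diagonal (fun k => (g k : ℂ)) * Vᴴ) i j
      = ∑ k, (g k : ℂ) * (V i k * (starRingEnd ℂ) (V j k)) := by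
  rw [mul_apply]
  refine Finset.sum_congr rfl fun k _ => ?_
  rw [mul_diagonal, conjTranspose_apply]
  rw [show star (V j k) = (starRingEnd ℂ) (V j k) from rfl]
  ring

lemma quad_conj (V : Matrix N N ℂ) (g : N → ℝ) (x : N → ℂ) :
    star x ⬝ᵥ ((V * diagonal (fun k => (g k : ℂ)) * Vᴴ) *ᵥ x)
      = ((∑ k, g k * Complex.normSq ((Vᴴ *ᵥ x) k) : ℝ) : ℂ) := by
  have h1 : star x ᵥ* V = star (Vᴴ *ᵥ x) := by
    rw [star_mulVec, conjTranspose_conjTranspose]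
  rw [← mulVec_mulVec, ← mulVec_mulVec, dotProduct_mulVec, dotProduct_mulVec, h1,
    ← dotProduct_mulVec]
  simp only [dotProduct, mulVec_diagonal, Pi.star_apply, Complex.ofReal_sum]
  refine Finset.sum_congr rfl fun k _ => ?_
  rw [Complex.ofReal_mul]
  rw [show star ((Vᴴ *ᵥ x) k) = (starRingEnd ℂ) ((Vᴴ *ᵥ x) k) from rfl,
    mul_comm ((starRingEnd ℂ) _), mul_assoc, Complex.mul_conj]

lemma inv_formula (c : Matrix N N ℂ) (hc : c.IsHermitian) (ε : ℝ)
    (hne : ∀ k, hc.eigenvalues k + ε ≠ 0) :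
    (c + (ε : ℂ) • 1)⁻¹ = (hc.eigenvectorUnitary : Matrix N N ℂ)
        * diagonal (fun k => (((hc.eigenvalues k + ε)⁻¹ : ℝ) : ℂ))
        * (hc.eigenvectorUnitary : Matrix N N ℂ)ᴴ := by
  set U : Matrix N N ℂ := (hc.eigenvectorUnitary : Matrix N N ℂ) with hUdef
  have hU1 : U * Uᴴ = 1 := by
    simpa [star_eq_conjTranspose] using (Matrix.mem_unitaryGroup_iff).mp hc.eigenvectorUnitary.2
  have hU2 : Uᴴ * U = 1 := by
    simpa [star_eq_conjTranspose] using (Matrix.mem_unitaryGroup_iff').mp hc.eigenvectorUnitary.2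
  have hsum : c + (ε : ℂ) • 1 = U * diagonal (fun k => ((hc.eigenvalues k + ε : ℝ) : ℂ)) * Uᴴ := by
    have h1 : ((ε : ℂ) • 1 : Matrix N N ℂ) = U * diagonal (fun _ => (ε : ℂ)) * Uᴴ := by
      rw [smul_one_eq_diagonal]
      calc (diagonal fun _ => (ε:ℂ)) = U * Uᴴ * diagonal (fun _ => (ε : ℂ)) := by rw [hU1, one_mul]
      _ = U * diagonal (fun _ => (ε : ℂ)) * Uᴴ := by
          rw [mul_assoc, mul_assoc]
          congr 1
          ext i j
          simp [mul_diagonal, diagonal_mul, mul_comm]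
    conv_lhs => rw [hc.spectral_theorem, Unitary.conjStarAlgAut_apply, h1]
    rw [star_eq_conjTranspose, ← add_mul, ← mul_add, diagonal_add]
    congr 2
    ext k
    simp [Function.comp]
  rw [hsum]
  apply inv_eq_left_inv
  have hD : diagonal (fun k => (((hc.eigenvalues k + ε)⁻¹ : ℝ) : ℂ))
      * diagonal (fun k => ((hc.eigenvalues k + ε : ℝ) : ℂ)) = 1 := by
    rw [diagonal_mul_diagonal]
    have : (fun k => (((hc.eigenvalues k + ε)⁻¹ : ℝ) : ℂ) * ((hc.eigenvalues k + ε : ℝ) : ℂ))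
        = fun _ => (1 : ℂ) := by
      funext k
      rw [← Complex.ofReal_mul, inv_mul_cancel₀ (hne k), Complex.ofReal_one]
    rw [this, diagonal_one]
  simp only [mul_assoc]
  rw [← mul_assoc Uᴴ U, hU2, one_mul, ← mul_assoc (diagonal _), hD, one_mul, hU1]

lemma bv_eq_zero {a b c : Matrix N N ℂ} (hM : (fromBlocks a b bᴴ c).PosSemidef)
    (v : N → ℂ) (hv : c *ᵥ v = 0) : b *ᵥ v = 0 := by
  have key : ∀ x : N → ℂ, star x ⬝ᵥ (b *ᵥ v) = 0 := by
    intro x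
    set s : ℂ := star x ⬝ᵥ (b *ᵥ v) with hs
    set q : ℂ := star x ⬝ᵥ (a *ᵥ x) with hq
    have expand : ∀ t : ℂ, 0 ≤ q + (t * s + (starRingEnd ℂ) (t * s)) := by
      intro t
      have h0 := hM.dotProduct_mulVec_nonneg (Sum.elim x (t • v))
      have hstar : star (Sum.elim x (t • v)) = Sum.elim (star x) (star (t • v)) := by
        funext i; cases i <;> rfl
      rw [fromBlocks_mulVec, hstar, sumElim_dotProduct_sumElim] at h0
      simp only [Sum.elim_comp_inl, Sum.elim_comp_inr] at h0
      have h3 : star (t • v) ⬝ᵥ (bᴴ *ᵥ x + c *ᵥ (t • v)) = (starRingEnd ℂ) (t * s) := by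
        rw [mulVec_smul, hv, smul_zero, add_zero, star_smul, smul_dotProduct]
        have h4 : star v ⬝ᵥ (bᴴ *ᵥ x) = (starRingEnd ℂ) s := by
          rw [dotProduct_mulVec, ← star_mulVec, star_dotProduct]
          rfl
        rw [h4]
        rw [smul_eq_mul, _root_.map_mul]
        rfl
      rw [dotProduct_add, mulVec_smul, dotProduct_smul, h3, smul_eq_mul, ← hq, ← hs] at h0
      calc (0:ℂ) ≤ q + t • s + (starRingEnd ℂ) (t * s) := by simpa using h0
        _ = q + (t * s + (starRingEnd ℂ) (t * s)) := by rw [smul_eq_mul, add_assoc]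
    by_contra hsne
    have hns : 0 < Complex.normSq s := by
      rcases (Complex.normSq_pos (z := s)).mpr hsne with h; exact h
    set r : ℝ := (q.re + 1) / (2 * Complex.normSq s) with hr
    have hts : ((-(r:ℂ)) * (starRingEnd ℂ) s) * s = ((- (r * Complex.normSq s) : ℝ) : ℂ) := by
      rw [mul_assoc]
      rw [show (starRingEnd ℂ) s * s = ((Complex.normSq s : ℝ) : ℂ) by
        rw [mul_comm, Complex.mul_conj]]
      push_cast
      ring
    have h5 := expand ((-(r:ℂ)) * (starRingEnd ℂ) s)
    rw [hts, Complex.conj_ofReal] at h5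
    have h6 := (Complex.le_def.mp h5).1
    simp only [Complex.add_re, Complex.zero_re, Complex.ofReal_re] at h6
    have h7 : 2 * r * Complex.normSq s = q.re + 1 := by
      rw [hr]; field_simp
    nlinarith [h6, h7]
  funext i
  have h8 := key (fun j => if j = i then (1:ℂ) else 0)
  simpa [dotProduct, apply_ite, Pi.star_apply] using h8

lemma U_mul_Uh (c : Matrix N N ℂ) (hc : c.IsHermitian) :
    (hc.eigenvectorUnitary : Matrix N N ℂ) * (hc.eigenvectorUnitary : Matrix N N ℂ)ᴴ = 1 := by
  simpa [star_eq_conjTranspose] using (Matrix.mem_unitaryGroup_iff).mp hc.eigenvectorUnitary.2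

lemma Uh_mul_U (c : Matrix N N ℂ) (hc : c.IsHermitian) :
    (hc.eigenvectorUnitary : Matrix N N ℂ)ᴴ * (hc.eigenvectorUnitary : Matrix N N ℂ) = 1 := by
  simpa [star_eq_conjTranspose] using (Matrix.mem_unitaryGroup_iff').mp hc.eigenvectorUnitary.2

lemma X_form (b c : Matrix N N ℂ) (hc : c.IsHermitian) (ε : ℝ)
    (hne : ∀ k, hc.eigenvalues k + ε ≠ 0) :
    b * (c + (ε : ℂ) • 1)⁻¹ * bᴴ
      = (b * (hc.eigenvectorUnitary : Matrix N N ℂ))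
        * diagonal (fun k => (((hc.eigenvalues k + ε)⁻¹ : ℝ) : ℂ))
        * (b * (hc.eigenvectorUnitary : Matrix N N ℂ))ᴴ := by
  rw [inv_formula c hc ε hne, conjTranspose_mul]
  simp only [mul_assoc]

lemma smul_one_posDef {ε : ℝ} (hε : 0 < ε) : ((ε : ℂ) • (1 : Matrix N N ℂ)).PosDef := by
  rw [smul_one_eq_diagonal]
  exact posDef_diagonal_iff.mpr fun i => by exact_mod_cast hε

lemma fromBlocks_zero_psd {X : Matrix N N ℂ} (hX : X.PosSemidef) :
    (fromBlocks (0 : Matrix N N ℂ) 0 0 X).PosSemidef := by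
  refine PosSemidef.of_dotProduct_mulVec_nonneg ?_ fun z => ?_
  · rw [IsHermitian, fromBlocks_conjTranspose]
    simp [hX.1.eq]
  · rw [← Sum.elim_comp_inl_inr z, fromBlocks_mulVec]
    have hstar : star (Sum.elim (z ∘ Sum.inl) (z ∘ Sum.inr))
        = Sum.elim (star (z ∘ Sum.inl)) (star (z ∘ Sum.inr)) := by
      funext i; cases i <;> rfl
    rw [hstar, sumElim_dotProduct_sumElim]
    simpa using hX.dotProduct_mulVec_nonneg (z ∘ Sum.inr)

lemma tendsto_quad {f : ℝ → Matrix N N ℂ} {l : Filter ℝ} {L : Matrix N N ℂ}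
    (hf : Tendsto f l (𝓝 L)) (x : N → ℂ) :
    Tendsto (fun ε => star x ⬝ᵥ (f ε *ᵥ x)) l (𝓝 (star x ⬝ᵥ (L *ᵥ x))) := by
  have hcont : Continuous fun M : Matrix N N ℂ => star x ⬝ᵥ (M *ᵥ x) := by
    simp only [dotProduct, mulVec]
    refine continuous_finset_sum _ fun i _ => Continuous.mul continuous_const ?_
    exact continuous_finset_sum _ fun j _ =>
      ((continuous_id.matrix_elem i j).mul continuous_const)
  exact (hcont.tendsto L).comp hf

end Stmt5Aux

open Stmt5Aux in
/-- The block matrix `[[a, b], [bᴴ, c]]` (with `a`, `c` Hermitian)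
is positive semidefinite iff `c ≥ 0`, the limit `L` of `b (c + ε•1)⁻¹ bᴴ` as
`ε → 0⁺` exists (this limit is `b c⁻ bᴴ` for the generalized inverse `c⁻`),
and `a ≥ L` in the Loewner order. -/
theorem stmt5 {N : Type*} [Fintype N] [DecidableEq N]
    (a b c : Matrix N N ℂ) (ha : a.IsHermitian) (hc : c.IsHermitian) :
    (Matrix.fromBlocks a b bᴴ c).PosSemidef ↔
      (c.PosSemidef ∧ ∃ L : Matrix N N ℂ,
        Filter.Tendsto (fun ε : ℝ => b * (c + (ε : ℂ) • 1)⁻¹ * bᴴ)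
          (nhdsWithin 0 (Set.Ioi 0)) (nhds L) ∧
        (a - L).PosSemidef) := by
  set d : N → ℝ := hc.eigenvalues with hd_def
  set U : Matrix N N ℂ := (hc.eigenvectorUnitary : Matrix N N ℂ) with hU_def
  set V : Matrix N N ℂ := b * U with hV_def
  constructor
  · intro hM
    have hcps : c.PosSemidef := by
      have h := hM.submatrix (Sum.inr : N → N ⊕ N)
      have he : (fromBlocks a b bᴴ c).submatrix (Sum.inr : N → N ⊕ N) Sum.inr = c := by
        ext i j; simp [submatrix_apply]
      rwa [he] at h
    have hdnn : ∀ k, 0 ≤ d k := fun k => hcps.eigenvalues_nonneg k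
    have hne : ∀ ε : ℝ, 0 < ε → ∀ k, d k + ε ≠ 0 :=
      fun ε hε k => ne_of_gt (by have := hdnn k; linarith)
    set g₀ : N → ℝ := fun k => if d k = 0 then 0 else (d k)⁻¹ with hg₀
    set L : Matrix N N ℂ := V * diagonal (fun k => (g₀ k : ℂ)) * Vᴴ with hL
    -- columns of V vanish on the kernel of c
    have hVcol : ∀ k, d k = 0 → ∀ i, V i k = 0 := by
      intro k hk i
      have hcU : c * U = U * diagonal (fun k => ((d k : ℝ) : ℂ)) := by
        conv_lhs => rw [hc.spectral_theorem, Unitary.conjStarAlgAut_apply, star_eq_conjTranspose]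
        rw [mul_assoc, Uh_mul_U c hc, mul_one]
        rfl
      have hcv : c *ᵥ (fun j => U j k) = 0 := by
        funext j
        have h1 : (c *ᵥ fun j' => U j' k) j = (c * U) j k := by
          simp [mulVec, mul_apply, dotProduct]
        rw [h1, hcU, mul_diagonal, hk]
        simp
      have hbv := bv_eq_zero hM _ hcv
      have h2 : V i k = (b *ᵥ fun j => U j k) i := by
        simp [hV_def, mul_apply, mulVec, dotProduct]
      rw [h2, hbv]
      rfl
    -- the X formula
    have hX : ∀ ε : ℝ, 0 < ε → b * (c + (ε:ℂ) • 1)⁻¹ * bᴴ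
        = V * diagonal (fun k => (((d k + ε)⁻¹ : ℝ) : ℂ)) * Vᴴ :=
      fun ε hε => X_form b c hc ε (hne ε hε)
    -- tendsto
    have hT : Filter.Tendsto (fun ε : ℝ => b * (c + (ε:ℂ) • 1)⁻¹ * bᴴ)
        (𝓝[>] (0:ℝ)) (𝓝 L) := by
      have hEv : ∀ᶠ ε in 𝓝[>] (0:ℝ),
          V * diagonal (fun k => (((d k + ε)⁻¹ : ℝ) : ℂ)) * Vᴴ
            = b * (c + (ε:ℂ) • 1)⁻¹ * bᴴ := by
        filter_upwards [self_mem_nhdsWithin] with ε hε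
        exact (hX ε hε).symm
      apply Filter.Tendsto.congr' hEv
      apply tendsto_pi_nhds.mpr
      intro i
      rw [tendsto_pi_nhds]
      intro j
      rw [hL]
      simp only [entry_conj]
      apply tendsto_finset_sum
      intro k _
      rcases eq_or_ne (d k) 0 with hk | hk
      · have hz : V i k = 0 := hVcol k hk i
        simp only [hz, zero_mul, mul_zero]
        exact tendsto_const_nhds
      · have h1 : Filter.Tendsto (fun ε : ℝ => (d k + ε)⁻¹) (𝓝[>] (0:ℝ)) (𝓝 ((d k)⁻¹)) := by
          have h0 : Filter.Tendsto (fun ε : ℝ => d k + ε) (𝓝[>] (0:ℝ)) (𝓝 (d k)) := by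
            have h0' : Filter.Tendsto (fun ε : ℝ => d k + ε) (𝓝 (0:ℝ)) (𝓝 (d k + 0)) :=
              tendsto_const_nhds.add Filter.tendsto_id
            simpa using h0'.mono_left nhdsWithin_le_nhds
          exact h0.inv₀ hk
        have h2 := (Complex.continuous_ofReal.tendsto _).comp h1
        have h3 : (g₀ k : ℂ) = (((d k)⁻¹ : ℝ) : ℂ) := by rw [hg₀]; simp [hk]
        rw [h3]
        exact h2.mul tendsto_const_nhds
    refine ⟨hcps, L, hT, PosSemidef.of_dotProduct_mulVec_nonneg (ha.sub (herm_conj V g₀)) fun x => ?_⟩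
    -- quadratic form inequality
    set w : N → ℂ := Vᴴ *ᵥ x with hw
    set qa : ℂ := star x ⬝ᵥ (a *ᵥ x) with hqa
    have hwz : ∀ k, d k = 0 → w k = 0 := by
      intro k hk
      rw [hw]
      simp only [mulVec, dotProduct, conjTranspose_apply]
      exact Finset.sum_eq_zero fun i _ => by rw [hVcol k hk i]; simp
    have hSε : ∀ ε : ℝ, 0 < ε →
        (∑ k, (d k + ε)⁻¹ * Complex.normSq (w k)) ≤ qa.re ∧ qa.im = 0 := by
      intro ε hε
      have hpd : (c + (ε:ℂ) • 1).PosDef := Matrix.PosDef.posSemidef_add hcps (smul_one_posDef hε)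
      haveI := hpd.isUnit.invertible
      have hMε : (fromBlocks a b bᴴ (c + (ε:ℂ) • 1)).PosSemidef := by
        have heq : fromBlocks a b bᴴ (c + (ε:ℂ) • 1)
            = fromBlocks a b bᴴ c + fromBlocks 0 0 0 ((ε:ℂ) • 1) := by
          rw [fromBlocks_add]; simp
        rw [heq]
        exact hM.add (fromBlocks_zero_psd ((smul_one_posDef hε).posSemidef))
      have hschur := ((PosDef.fromBlocks₂₂ a b hpd).mp hMε).dotProduct_mulVec_nonneg x
      rw [sub_mulVec, dotProduct_sub, hX ε hε, quad_conj] at hschur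
      have h5 := Complex.le_def.mp hschur
      constructor
      · have := h5.1
        simp only [Complex.sub_re, Complex.ofReal_re, Complex.zero_re] at this
        rw [← hqa] at this
        linarith
      · have := h5.2
        rw [← hqa] at this
        simp only [Complex.sub_im, Complex.ofReal_im, Complex.zero_im] at this
        linarith
    have hTS : Filter.Tendsto (fun ε : ℝ => ∑ k, (d k + ε)⁻¹ * Complex.normSq (w k))
        (𝓝[>] (0:ℝ)) (𝓝 (∑ k, g₀ k * Complex.normSq (w k))) := by
      apply tendsto_finset_sum
      intro k _
      rcases eq_or_ne (d k) 0 with hk | hk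
      · simp only [hwz k hk, map_zero, Complex.normSq_zero, mul_zero]
        exact tendsto_const_nhds
      · have h0 : Filter.Tendsto (fun ε : ℝ => d k + ε) (𝓝[>] (0:ℝ)) (𝓝 (d k)) := by
          have h0' : Filter.Tendsto (fun ε : ℝ => d k + ε) (𝓝 (0:ℝ)) (𝓝 (d k + 0)) :=
            tendsto_const_nhds.add Filter.tendsto_id
          simpa using h0'.mono_left nhdsWithin_le_nhds
        have h3 : g₀ k = (d k)⁻¹ := by rw [hg₀]; simp [hk]
        rw [h3]
        exact (h0.inv₀ hk).mul tendsto_const_nhds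
    have hle : (∑ k, g₀ k * Complex.normSq (w k)) ≤ qa.re :=
      le_of_tendsto hTS (by
        filter_upwards [self_mem_nhdsWithin] with ε hε
        exact (hSε ε hε).1)
    have him : qa.im = 0 := (hSε 1 one_pos).2
    rw [sub_mulVec, dotProduct_sub, hL, quad_conj, ← hw, ← hqa]
    rw [Complex.le_def]
    constructor
    · simp only [Complex.sub_re, Complex.ofReal_re, Complex.zero_re]
      linarith
    · simp only [Complex.sub_im, Complex.ofReal_im, Complex.zero_im, him]
      ring
  · rintro ⟨hcps, L, hT, hAL⟩
    have hdnn : ∀ k, 0 ≤ d k := fun k => hcps.eigenvalues_nonneg k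
    have hne : ∀ ε : ℝ, 0 < ε → ∀ k, d k + ε ≠ 0 :=
      fun ε hε k => ne_of_gt (by have := hdnn k; linarith)
    have hX : ∀ ε : ℝ, 0 < ε → b * (c + (ε:ℂ) • 1)⁻¹ * bᴴ
        = V * diagonal (fun k => (((d k + ε)⁻¹ : ℝ) : ℂ)) * Vᴴ :=
      fun ε hε => X_form b c hc ε (hne ε hε)
    have hMε : ∀ ε : ℝ, 0 < ε → (fromBlocks a b bᴴ (c + (ε:ℂ) • 1)).PosSemidef := by
      intro ε hε
      have hpd : (c + (ε:ℂ) • 1).PosDef := Matrix.PosDef.posSemidef_add hcps (smul_one_posDef hε)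
      haveI := hpd.isUnit.invertible
      refine (PosDef.fromBlocks₂₂ a b hpd).mpr (PosSemidef.of_dotProduct_mulVec_nonneg ?_ fun x => ?_)
      · rw [hX ε hε]
        exact ha.sub (herm_conj V _)
      · set w : N → ℂ := Vᴴ *ᵥ x with hw
        set S : ℝ → ℝ := fun δ => ∑ k, (d k + δ)⁻¹ * Complex.normSq (w k) with hS
        have hq : ∀ δ : ℝ, 0 < δ →
            star x ⬝ᵥ ((b * (c + (δ:ℂ) • 1)⁻¹ * bᴴ) *ᵥ x) = ((S δ : ℝ) : ℂ) := by
          intro δ hδ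
          rw [hX δ hδ, quad_conj, ← hw, hS]
        have hqL := tendsto_quad hT x
        set qL : ℂ := star x ⬝ᵥ (L *ᵥ x) with hqL_def
        have hmono : ∀ δ : ℝ, 0 < δ → δ ≤ ε → S ε ≤ S δ := by
          intro δ hδ hδε
          apply Finset.sum_le_sum
          intro k _
          have h1 : 0 < d k + δ := by have := hdnn k; linarith
          refine mul_le_mul_of_nonneg_right ?_ (Complex.normSq_nonneg _)
          exact inv_anti₀ h1 (by linarith)
        have him : qL.im = 0 := by
          have h2 : Filter.Tendsto
              (fun δ : ℝ => (star x ⬝ᵥ ((b * (c + (δ:ℂ) • 1)⁻¹ * bᴴ) *ᵥ x)).im)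
              (𝓝[>] (0:ℝ)) (𝓝 qL.im) := (Complex.continuous_im.tendsto _).comp hqL
          have h3 : (fun δ : ℝ => (star x ⬝ᵥ ((b * (c + (δ:ℂ) • 1)⁻¹ * bᴴ) *ᵥ x)).im)
              =ᶠ[𝓝[>] (0:ℝ)] fun _ => (0:ℝ) := by
            filter_upwards [self_mem_nhdsWithin] with δ hδ
            rw [hq δ hδ]; simp
          exact (tendsto_nhds_unique (h2.congr' h3) tendsto_const_nhds).symm ▸ rfl
        have hre : S ε ≤ qL.re := by
          have h2 : Filter.Tendsto
              (fun δ : ℝ => (star x ⬝ᵥ ((b * (c + (δ:ℂ) • 1)⁻¹ * bᴴ) *ᵥ x)).re)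
              (𝓝[>] (0:ℝ)) (𝓝 qL.re) := (Complex.continuous_re.tendsto _).comp hqL
          apply ge_of_tendsto h2
          filter_upwards [Ioc_mem_nhdsGT hε] with δ hδ
          rw [hq δ hδ.1]
          simpa using hmono δ hδ.1 hδ.2
        have hALx := hAL.dotProduct_mulVec_nonneg x
        rw [sub_mulVec, dotProduct_sub, ← hqL_def] at hALx
        rw [sub_mulVec, dotProduct_sub, hq ε hε]
        rw [Complex.le_def] at hALx ⊢
        constructor
        · have h4 := hALx.1
          simp only [Complex.sub_re, Complex.zero_re, Complex.ofReal_re] at h4 ⊢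
          linarith
        · have h5 := hALx.2
          simp only [Complex.sub_im, Complex.zero_im, Complex.ofReal_im] at h5 ⊢
          rw [him] at h5
          linarith
    refine PosSemidef.of_dotProduct_mulVec_nonneg ?_ fun z => ?_
    · rw [IsHermitian, fromBlocks_conjTranspose, ha.eq, hc.eq, conjTranspose_conjTranspose]
    · set z₂ : N → ℂ := z ∘ Sum.inr with hz2
      set T : ℝ := ∑ i, Complex.normSq (z₂ i) with hT_def
      have hTnn : 0 ≤ T := Finset.sum_nonneg fun i _ => Complex.normSq_nonneg _
      set Q : ℂ := star z ⬝ᵥ (fromBlocks a b bᴴ c *ᵥ z) with hQ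
      have key : ∀ ε : ℝ, 0 < ε → 0 ≤ Q + ((ε * T : ℝ) : ℂ) := by
        intro ε hε
        have h0 := (hMε ε hε).dotProduct_mulVec_nonneg z
        have heq : fromBlocks a b bᴴ (c + (ε:ℂ) • 1)
            = fromBlocks a b bᴴ c + fromBlocks 0 0 0 ((ε:ℂ) • 1) := by
          rw [fromBlocks_add]; simp
        rw [heq, add_mulVec, dotProduct_add] at h0
        have h1 : star z ⬝ᵥ (fromBlocks (0 : Matrix N N ℂ) 0 0 ((ε:ℂ) • 1) *ᵥ z)
            = ((ε * T : ℝ) : ℂ) := by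
          rw [← Sum.elim_comp_inl_inr z, fromBlocks_mulVec]
          have hstar : star (Sum.elim (z ∘ Sum.inl) (z ∘ Sum.inr))
              = Sum.elim (star (z ∘ Sum.inl)) (star (z ∘ Sum.inr)) := by
            funext i; cases i <;> rfl
          rw [hstar, sumElim_dotProduct_sumElim]
          simp only [zero_mulVec, add_zero, zero_add, dotProduct_zero]
          rw [smul_mulVec, one_mulVec, dotProduct_smul, smul_eq_mul]
          have h6 : star z₂ ⬝ᵥ z₂ = ((T : ℝ) : ℂ) := by
            rw [hT_def]
            simp only [dotProduct, Pi.star_apply, Complex.ofReal_sum]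
            refine Finset.sum_congr rfl fun i _ => ?_
            rw [mul_comm]
            exact Complex.mul_conj (z₂ i)
          rw [Sum.elim_comp_inr, ← hz2, h6]
          push_cast
          ring
        rw [h1, ← hQ] at h0
        exact h0
      have him : Q.im = 0 := by
        have h7 := (Complex.le_def.mp (key 1 one_pos)).2
        simp only [Complex.add_im, Complex.zero_im, Complex.ofReal_im] at h7
        linarith
      have hre : 0 ≤ Q.re := by
        by_contra hlt
        push_neg at hlt
        rcases eq_or_lt_of_le hTnn with hT0 | hT0
        · have h8 := (Complex.le_def.mp (key 1 one_pos)).1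
          simp only [Complex.add_re, Complex.zero_re, Complex.ofReal_re, ← hT0] at h8
          simp at h8
          linarith
        · set ε : ℝ := -Q.re / (2 * T) with hε_def
          have hεpos : 0 < ε := div_pos (neg_pos.mpr hlt) (by linarith)
          have h9 := (Complex.le_def.mp (key ε hεpos)).1
          simp only [Complex.add_re, Complex.zero_re, Complex.ofReal_re] at h9
          have hεT : ε * T = -Q.re / 2 := by
            rw [hε_def]; field_simp
          rw [hεT] at h9
          linarith
      rw [Complex.le_def]
      exact ⟨by simpa using hre, by simp [him]⟩
end

section
/- Let T : A → B be a positive trace-preserving linear map and ρ ∈ A an invertible density operator. Define T_ρ(b) = T(ρ)^{-1/2} T(ρ^{1/2} b ρ^{1/2}) T(ρ)^{-1/2} (using generalized inverses on the support of T(ρ)). Then T_ρ satisfies the Schwarz inequality T_ρ(b*b) ≥ T_ρ(b)* T_ρ(b) for all b if and only if T satisfies the generalized Schwarz inequality for c = ρ, i.e., T(a* ρ⁻¹ a) ≥ T(a)* T(ρ)⁻¹ T(a) for all a ∈ A. -/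
open Matrix ComplexOrder

/-- The positive semidefinite square root of a positive semidefinite matrix
(the definition removed from Mathlib, restored verbatim). -/
noncomputable def Matrix.PosSemidef.sqrt {𝕜 : Type*} [RCLike 𝕜] {n : Type*} [Fintype n]
    [DecidableEq n] {A : Matrix n n 𝕜} (hA : A.PosSemidef) : Matrix n n 𝕜 :=
  (hA.1.eigenvectorUnitary : Matrix n n 𝕜) *
    diagonal (fun i => ((Real.sqrt (hA.1.eigenvalues i) : ℝ) : 𝕜)) *
    (star hA.1.eigenvectorUnitary : Matrix n n 𝕜)

lemma Matrix.PosSemidef.posSemidef_sqrt {k : Type*} [Fintype k] [DecidableEq k]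
    {A : Matrix k k ℂ} (hA : A.PosSemidef) : hA.sqrt.PosSemidef := by
  unfold Matrix.PosSemidef.sqrt
  have hD : (diagonal (fun i => ((Real.sqrt (hA.1.eigenvalues i) : ℝ) : ℂ))).PosSemidef := by
    rw [posSemidef_diagonal_iff]
    intro i
    exact_mod_cast Real.sqrt_nonneg _
  have := hD.mul_mul_conjTranspose_same (hA.1.eigenvectorUnitary : Matrix k k ℂ)
  simpa [star_eq_conjTranspose] using this

lemma Matrix.PosSemidef.sqrt_mul_self {k : Type*} [Fintype k] [DecidableEq k]
    {A : Matrix k k ℂ} (hA : A.PosSemidef) : hA.sqrt * hA.sqrt = A := by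
  unfold Matrix.PosSemidef.sqrt
  set U : Matrix k k ℂ := (hA.1.eigenvectorUnitary : Matrix k k ℂ)
  have hU : star U * U = 1 := Unitary.coe_star_mul_self _
  have hDD : diagonal (fun i => ((Real.sqrt (hA.1.eigenvalues i) : ℝ) : ℂ)) *
      diagonal (fun i => ((Real.sqrt (hA.1.eigenvalues i) : ℝ) : ℂ))
      = diagonal (RCLike.ofReal ∘ hA.1.eigenvalues) := by
    rw [diagonal_mul_diagonal]
    congr 1
    funext i
    simp only [Function.comp_apply]
    rw [← Complex.ofReal_mul, Real.mul_self_sqrt (hA.eigenvalues_nonneg i)]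
    rfl
  have e : U * diagonal (fun i => ((Real.sqrt (hA.1.eigenvalues i) : ℝ) : ℂ)) * star U *
      (U * diagonal (fun i => ((Real.sqrt (hA.1.eigenvalues i) : ℝ) : ℂ)) * star U)
      = U * (diagonal (fun i => ((Real.sqrt (hA.1.eigenvalues i) : ℝ) : ℂ)) *
      diagonal (fun i => ((Real.sqrt (hA.1.eigenvalues i) : ℝ) : ℂ))) * star U := by
    simp only [Matrix.mul_assoc]
    rw [← Matrix.mul_assoc (star U) U, hU, Matrix.one_mul]
  refine (e : _).trans ?_
  rw [hDD]
  conv_rhs => rw [hA.1.spectral_theorem]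
  rfl

lemma sqrtPosDef {k : Type*} [Fintype k] [DecidableEq k] {A : Matrix k k ℂ}
    (hA : A.PosDef) : (hA.posSemidef.sqrt).PosDef := by
  set S := hA.posSemidef.sqrt with hSdef
  have hS : S.PosSemidef := hA.posSemidef.posSemidef_sqrt
  have hSS : S * S = A := hA.posSemidef.sqrt_mul_self
  have hdet : IsUnit S.det := by
    have hd : S.det * S.det = A.det := by rw [← Matrix.det_mul, hSS]
    have hAd : A.det ≠ 0 := hA.det_pos.ne'
    exact isUnit_iff_ne_zero.mpr (fun h => hAd (by rw [← hd, h, mul_zero]))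
  exact hS.posDef_iff_isUnit.mpr ((Matrix.isUnit_iff_isUnit_det S).mpr hdet)

lemma conjHelper {k : Type*} [Fintype k] [DecidableEq k] {S : Matrix k k ℂ}
    (hS : S.PosDef) (M N : Matrix k k ℂ) :
    S * ((S⁻¹ * M * S⁻¹) - (S⁻¹ * N * S⁻¹)ᴴ * (S⁻¹ * N * S⁻¹)) * S
      = M - Nᴴ * (S * S)⁻¹ * N := by
  have hH : Sᴴ = S := hS.isHermitian
  have hdet : IsUnit S.det := hS.det_pos.ne'.isUnit
  have h1 : S * S⁻¹ = 1 := Matrix.mul_nonsing_inv S hdet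
  have h2 : S⁻¹ * S = 1 := Matrix.nonsing_inv_mul S hdet
  have hHi : (S⁻¹)ᴴ = S⁻¹ := by rw [Matrix.conjTranspose_nonsing_inv, hH]
  have e1 : ∀ M : Matrix k k ℂ, S * (S⁻¹ * M) = M := fun M => by
    rw [← Matrix.mul_assoc, h1, Matrix.one_mul]
  have e2 : ∀ M : Matrix k k ℂ, S⁻¹ * (S * M) = M := fun M => by
    rw [← Matrix.mul_assoc, h2, Matrix.one_mul]
  simp [Matrix.mul_sub, Matrix.sub_mul, Matrix.conjTranspose_mul, hH, hHi,
    Matrix.mul_assoc, Matrix.mul_inv_rev, h1, h2, e1, e2]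

lemma conjHelper2 {k : Type*} [Fintype k] [DecidableEq k] {S : Matrix k k ℂ}
    (hS : S.PosDef) (M N : Matrix k k ℂ) :
    S⁻¹ * (M - Nᴴ * (S * S)⁻¹ * N) * S⁻¹
      = (S⁻¹ * M * S⁻¹) - (S⁻¹ * N * S⁻¹)ᴴ * (S⁻¹ * N * S⁻¹) := by
  have hdet : IsUnit S.det := hS.det_pos.ne'.isUnit
  have h1 : S * S⁻¹ = 1 := Matrix.mul_nonsing_inv S hdet
  have h2 : S⁻¹ * S = 1 := Matrix.nonsing_inv_mul S hdet
  have e2 : ∀ M : Matrix k k ℂ, S⁻¹ * (S * M) = M := fun M => by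
    rw [← Matrix.mul_assoc, h2, Matrix.one_mul]
  rw [← conjHelper hS M N]
  simp [Matrix.mul_assoc, h1, h2, e2]

/-- For a positive trace-preserving `T` and an invertible density
operator `ρ` with `T ρ` invertible, the map
`Tρ b = T(ρ)^{-1/2} T(ρ^{1/2} b ρ^{1/2}) T(ρ)^{-1/2}` is a Schwarz map iff `T`
satisfies the generalized Schwarz inequality for `c = ρ`. -/
theorem stmt7 {n m : Type*} [Fintype n] [DecidableEq n] [Fintype m] [DecidableEq m]
    (T : Matrix n n ℂ →ₗ[ℂ] Matrix m m ℂ)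
    (hpos : ∀ a : Matrix n n ℂ, a.PosSemidef → (T a).PosSemidef)
    (htp : ∀ a : Matrix n n ℂ, (T a).trace = a.trace)
    (ρ : Matrix n n ℂ) (hρ : ρ.PosDef) (hρ1 : ρ.trace = 1) (hTρ : (T ρ).PosDef)
    (Tρ : Matrix n n ℂ → Matrix m m ℂ)
    (hTρdef : ∀ b : Matrix n n ℂ,
      Tρ b = (hTρ.posSemidef.sqrt)⁻¹ *
        T (hρ.posSemidef.sqrt * b * hρ.posSemidef.sqrt) * (hTρ.posSemidef.sqrt)⁻¹) :
    (∀ b : Matrix n n ℂ, (Tρ (bᴴ * b) - (Tρ b)ᴴ * (Tρ b)).PosSemidef) ↔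
    (∀ a : Matrix n n ℂ, (T (aᴴ * ρ⁻¹ * a) - (T a)ᴴ * (T ρ)⁻¹ * (T a)).PosSemidef) := by
  set r := hρ.posSemidef.sqrt with hrdef
  set S := hTρ.posSemidef.sqrt with hSdef
  have hr : r.PosDef := sqrtPosDef hρ
  have hS : S.PosDef := sqrtPosDef hTρ
  have hrr : r * r = ρ := hρ.posSemidef.sqrt_mul_self
  have hSS : S * S = T ρ := hTρ.posSemidef.sqrt_mul_self
  have hrH : rᴴ = r := hr.isHermitian
  have hSH : Sᴴ = S := hS.isHermitian
  have hrdet : IsUnit r.det := hr.det_pos.ne'.isUnit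
  have hr1 : r * r⁻¹ = 1 := Matrix.mul_nonsing_inv r hrdet
  have hr2 : r⁻¹ * r = 1 := Matrix.nonsing_inv_mul r hrdet
  have hrHi : (r⁻¹)ᴴ = r⁻¹ := by rw [Matrix.conjTranspose_nonsing_inv, hrH]
  have er1 : ∀ M : Matrix n n ℂ, r * (r⁻¹ * M) = M := fun M => by
    rw [← Matrix.mul_assoc, hr1, Matrix.one_mul]
  have er2 : ∀ M : Matrix n n ℂ, r⁻¹ * (r * M) = M := fun M => by
    rw [← Matrix.mul_assoc, hr2, Matrix.one_mul]
  have hρinv : ρ⁻¹ = r⁻¹ * r⁻¹ := by rw [← hrr, Matrix.mul_inv_rev]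
  constructor
  · intro h a
    set b := r⁻¹ * a * r⁻¹ with hbdef
    have hab : r * b * r = a := by
      simp [hbdef, Matrix.mul_assoc, hr1, hr2, er1, er2]
    have hab2 : r * (bᴴ * b) * r = aᴴ * ρ⁻¹ * a := by
      simp [hbdef, hρinv, Matrix.conjTranspose_mul, hrH, hrHi,
        Matrix.mul_assoc, hr1, hr2, er1, er2]
    have key := h b
    have hconj := key.mul_mul_conjTranspose_same S
    rw [hSH] at hconj
    have heq : S * (Tρ (bᴴ * b) - (Tρ b)ᴴ * (Tρ b)) * S
        = T (aᴴ * ρ⁻¹ * a) - (T a)ᴴ * (T ρ)⁻¹ * (T a) := by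
      rw [hTρdef, hTρdef, hab, hab2, conjHelper hS, hSS]
    rwa [heq] at hconj
  · intro h b
    set a := r * b * r with hadef
    have hab2 : aᴴ * ρ⁻¹ * a = r * (bᴴ * b) * r := by
      simp [hadef, hρinv, Matrix.conjTranspose_mul, hrH, hrHi,
        Matrix.mul_assoc, hr1, hr2, er1, er2]
    have key := h a
    have hconj := key.mul_mul_conjTranspose_same S⁻¹
    have hSHi : (S⁻¹)ᴴ = S⁻¹ := by rw [Matrix.conjTranspose_nonsing_inv, hSH]
    rw [hSHi] at hconj
    have heq : S⁻¹ * (T (aᴴ * ρ⁻¹ * a) - (T a)ᴴ * (T ρ)⁻¹ * (T a)) * S⁻¹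
        = Tρ (bᴴ * b) - (Tρ b)ᴴ * (Tρ b) := by
      rw [hTρdef, hTρdef, ← hSS, hab2]
      exact conjHelper2 hS _ _
    rwa [heq] at hconj
end

section
/- Let Φ : A → B be a unital Schwarz map. Then M_Φ = {a ∈ A : Φ(a*a) = Φ(a)*Φ(a) and Φ(aa*) = Φ(a)Φ(a)*} equals {a ∈ A : Φ(ab) = Φ(a)Φ(b) and Φ(ba) = Φ(b)Φ(a) for all b ∈ A}; in particular M_Φ is a C*-subalgebra of A and Φ restricted to M_Φ is a *-homomorphism. -/
open Matrix ComplexOrder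

section Stmt11Aux

lemma quad_zero {m : Type*} [Fintype m] [DecidableEq m] (M : Matrix m m ℂ)
    (h : ∀ v : m → ℂ, star v ⬝ᵥ (M *ᵥ v) = 0) : M = 0 := by
  have : Matrix.toEuclideanLin M = 0 := by
    rw [← inner_map_self_eq_zero]
    intro x
    rw [← inner_conj_symm]
    have := h ((WithLp.equiv 2 (m → ℂ)) x)
    rw [EuclideanSpace.inner_eq_star_dotProduct]
    simp [Matrix.ofLp_toEuclideanLin_apply]
    rw [dotProduct_comm]
    simpa using this
  simpa using congrArg Matrix.toEuclideanLin.symm this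

lemma quad_conjTranspose {m : Type*} [Fintype m] (M : Matrix m m ℂ) (v : m → ℂ) :
    star v ⬝ᵥ (Mᴴ *ᵥ v) = star (star v ⬝ᵥ (M *ᵥ v)) := by
  simp only [dotProduct, mulVec, conjTranspose_apply, Pi.star_apply, star_sum,
    Finset.mul_sum]
  rw [Finset.sum_comm]
  congr 1; ext i; congr 1; ext j
  simp only [StarMul.star_mul, star_star]; ring

variable {n m : Type*} [Fintype n] [DecidableEq n] [Fintype m] [DecidableEq m]
    (Φ : Matrix n n ℂ →ₗ[ℂ] Matrix m m ℂ)
    (hunital : Φ 1 = 1)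
    (hschwarz : ∀ a : Matrix n n ℂ, (Φ (aᴴ * a) - (Φ a)ᴴ * Φ a).PosSemidef)

include hunital hschwarz

lemma phi_star (a : Matrix n n ℂ) : Φ aᴴ = (Φ a)ᴴ := by
  set D := Φ (aᴴ * a) - (Φ a)ᴴ * Φ a with hD
  set X := Φ aᴴ - (Φ a)ᴴ with hX
  have key : ∀ t : ℝ, (D + (t : ℂ) • X).PosSemidef := by
    intro t
    have h := hschwarz (a + (t : ℂ) • 1)
    have e : Φ ((a + (t:ℂ)•1)ᴴ * (a + (t:ℂ)•1)) - (Φ (a + (t:ℂ)•1))ᴴ * Φ (a + (t:ℂ)•1)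
        = D + (t : ℂ) • X := by
      simp only [conjTranspose_add, conjTranspose_smul, conjTranspose_one, mul_add, add_mul,
        smul_mul_assoc, mul_smul_comm, map_add, _root_.map_smul, hunital, smul_smul, mul_one,
        one_mul, hD, hX, Complex.star_def, Complex.conj_ofReal]
      ext i j
      simp [Matrix.add_apply, Matrix.sub_apply, Matrix.smul_apply]
      ring
    rwa [e] at h
  have hX0 : X = 0 := by
    apply quad_zero
    intro v
    set d := star v ⬝ᵥ (D *ᵥ v) with hd
    set z := star v ⬝ᵥ (X *ᵥ v) with hz
    have hq : ∀ t : ℝ, 0 ≤ d + (t : ℂ) * z := by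
      intro t
      have := (key t).dotProduct_mulVec_nonneg v
      rwa [add_mulVec, smul_mulVec, dotProduct_add, dotProduct_smul, smul_eq_mul] at this
    have him : z.im = 0 := by
      have h0 := (Complex.nonneg_iff.mp (hq 0)).2
      have h1 := (Complex.nonneg_iff.mp (hq 1)).2
      simp [Complex.add_im, Complex.mul_im] at h0 h1
      linarith
    have hre : z.re = 0 := by
      by_contra hne
      have := (Complex.nonneg_iff.mp (hq (-(d.re + 1) / z.re))).1
      simp [Complex.add_re, Complex.mul_re, him] at this
      rw [div_mul_cancel₀] at this
      · linarith
      · exact hne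
    exact Complex.ext (by simp [hre]) (by simp [him])
  rw [hX] at hX0
  exact sub_eq_zero.mp hX0

lemma phi_mul_left (a : Matrix n n ℂ) (ha : Φ (aᴴ * a) = (Φ a)ᴴ * Φ a) (b : Matrix n n ℂ) :
    Φ (aᴴ * b) = (Φ a)ᴴ * Φ b := by
  have hstar := phi_star Φ hunital hschwarz
  set E := Φ (aᴴ * b) - (Φ a)ᴴ * Φ b with hE
  set Dbb := Φ (bᴴ * b) - (Φ b)ᴴ * Φ b with hDbb
  have h1 : Eᴴ = Φ (bᴴ * a) - (Φ b)ᴴ * Φ a := by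
    simp [hE, conjTranspose_sub, conjTranspose_mul, ← hstar]
  have key : ∀ c : ℂ, (star c • E + c • Eᴴ + Dbb).PosSemidef := by
    intro c
    have h := hschwarz (c • a + b)
    have e : Φ ((c•a+b)ᴴ * (c•a+b)) - (Φ (c•a+b))ᴴ * Φ (c•a+b)
        = star c • E + c • Eᴴ + Dbb := by
      rw [h1]
      simp only [conjTranspose_add, conjTranspose_smul, mul_add, add_mul,
        smul_mul_assoc, mul_smul_comm, map_add, _root_.map_smul, smul_smul, ha, hE, hDbb]
      ext i j
      simp [Matrix.add_apply, Matrix.sub_apply, Matrix.smul_apply]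
      ring
    rwa [e] at h
  have hE0 : E = 0 := by
    apply quad_zero
    intro v
    set d := star v ⬝ᵥ (Dbb *ᵥ v) with hd
    set z := star v ⬝ᵥ (E *ᵥ v) with hz
    have hq : ∀ c : ℂ, 0 ≤ star c * z + c * star z + d := by
      intro c
      have := (key c).dotProduct_mulVec_nonneg v
      rwa [add_mulVec, add_mulVec, smul_mulVec, smul_mulVec, dotProduct_add,
        dotProduct_add, dotProduct_smul, dotProduct_smul, smul_eq_mul, smul_eq_mul,
        quad_conjTranspose] at this
    have hns : Complex.normSq z = 0 := by
      by_contra hne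
      set t : ℝ := (d.re + 1) / (2 * Complex.normSq z) with ht
      have := (Complex.nonneg_iff.mp (hq (-(t:ℂ) * z))).1
      have hzz : star ((-(t:ℂ)) * z) * z + ((-(t:ℂ)) * z) * star z
          = -((2*t : ℝ) : ℂ) * Complex.normSq z := by
        simp only [star_mul', Complex.star_def, map_neg, Complex.conj_ofReal]
        rw [← Complex.mul_conj]
        push_cast
        ring
      rw [hzz] at this
      have hre : (-((2*t : ℝ) : ℂ) * (Complex.normSq z : ℂ) + d).re
          = -(2*t) * Complex.normSq z + d.re := by
        simp [Complex.add_re, Complex.mul_re]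
      rw [hre, ht] at this
      have hpos : (0:ℝ) < Complex.normSq z :=
        lt_of_le_of_ne (Complex.normSq_nonneg z) (Ne.symm hne)
      have hc : 2 * ((d.re + 1) / (2 * Complex.normSq z)) * Complex.normSq z = d.re + 1 := by
        field_simp
      nlinarith [hc]
    exact Complex.normSq_eq_zero.mp hns
  exact sub_eq_zero.mp hE0

lemma phi_mul_left' (a : Matrix n n ℂ) (ha : Φ (a * aᴴ) = Φ a * (Φ a)ᴴ) (b : Matrix n n ℂ) :
    Φ (a * b) = Φ a * Φ b := by
  have hstar := phi_star Φ hunital hschwarz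
  have h := phi_mul_left Φ hunital hschwarz aᴴ
    (by rw [conjTranspose_conjTranspose, hstar, conjTranspose_conjTranspose]; exact ha) b
  rwa [conjTranspose_conjTranspose, hstar, conjTranspose_conjTranspose] at h

lemma phi_mul_right (a : Matrix n n ℂ) (ha : Φ (aᴴ * a) = (Φ a)ᴴ * Φ a) (b : Matrix n n ℂ) :
    Φ (b * a) = Φ b * Φ a := by
  have hstar := phi_star Φ hunital hschwarz
  have h := congrArg conjTranspose (phi_mul_left Φ hunital hschwarz a ha bᴴ)
  simpa only [← hstar, conjTranspose_mul, conjTranspose_conjTranspose] using h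

end Stmt11Aux

/-- For a unital Schwarz map `Φ`, the multiplicative domain
`M_Φ = {a : Φ(aᴴa) = Φ(a)ᴴΦ(a) and Φ(aaᴴ) = Φ(a)Φ(a)ᴴ}` coincides with
`{a : Φ(ab) = Φ(a)Φ(b) and Φ(ba) = Φ(b)Φ(a) for all b}`; in particular it is
a C*-subalgebra (closed under multiplication and adjoints) and `Φ` restricted
to it is a *-homomorphism. -/
theorem stmt11 {n m : Type*} [Fintype n] [DecidableEq n] [Fintype m] [DecidableEq m]
    (Φ : Matrix n n ℂ →ₗ[ℂ] Matrix m m ℂ)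
    (hunital : Φ 1 = 1)
    (hschwarz : ∀ a : Matrix n n ℂ, (Φ (aᴴ * a) - (Φ a)ᴴ * Φ a).PosSemidef) :
    (∀ a : Matrix n n ℂ,
      (Φ (aᴴ * a) = (Φ a)ᴴ * Φ a ∧ Φ (a * aᴴ) = Φ a * (Φ a)ᴴ) ↔
      (∀ b : Matrix n n ℂ, Φ (a * b) = Φ a * Φ b ∧ Φ (b * a) = Φ b * Φ a)) ∧
    (∀ a b : Matrix n n ℂ,
      (Φ (aᴴ * a) = (Φ a)ᴴ * Φ a ∧ Φ (a * aᴴ) = Φ a * (Φ a)ᴴ) →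
      (Φ (bᴴ * b) = (Φ b)ᴴ * Φ b ∧ Φ (b * bᴴ) = Φ b * (Φ b)ᴴ) →
      (Φ ((a * b)ᴴ * (a * b)) = (Φ (a * b))ᴴ * Φ (a * b) ∧
        Φ ((a * b) * (a * b)ᴴ) = Φ (a * b) * (Φ (a * b))ᴴ)) ∧
    (∀ a : Matrix n n ℂ,
      (Φ (aᴴ * a) = (Φ a)ᴴ * Φ a ∧ Φ (a * aᴴ) = Φ a * (Φ a)ᴴ) →
      ((Φ ((aᴴ)ᴴ * aᴴ) = (Φ aᴴ)ᴴ * Φ aᴴ ∧ Φ (aᴴ * (aᴴ)ᴴ) = Φ aᴴ * (Φ aᴴ)ᴴ) ∧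
        Φ aᴴ = (Φ a)ᴴ)) := by
  have hstar := phi_star Φ hunital hschwarz
  refine ⟨?_, ?_, ?_⟩
  · intro a
    constructor
    · rintro ⟨ha1, ha2⟩ b
      exact ⟨phi_mul_left' Φ hunital hschwarz a ha2 b,
        phi_mul_right Φ hunital hschwarz a ha1 b⟩
    · intro h
      refine ⟨?_, ?_⟩
      · rw [(h aᴴ).2, hstar]
      · rw [(h aᴴ).1, hstar]
  · rintro a b ⟨ha1, ha2⟩ ⟨hb1, hb2⟩
    have hab : Φ (a * b) = Φ a * Φ b := phi_mul_left' Φ hunital hschwarz a ha2 b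
    constructor
    · rw [conjTranspose_mul, mul_assoc,
        phi_mul_left Φ hunital hschwarz b hb1 (aᴴ * (a * b)),
        phi_mul_left Φ hunital hschwarz a ha1 (a * b), hab]
      simp only [conjTranspose_mul, mul_assoc]
    · rw [conjTranspose_mul, mul_assoc,
        phi_mul_left' Φ hunital hschwarz a ha2 (b * (bᴴ * aᴴ)),
        phi_mul_left' Φ hunital hschwarz b hb2 (bᴴ * aᴴ),
        phi_mul_left Φ hunital hschwarz b hb1 aᴴ, hstar, hab]
      simp only [conjTranspose_mul, mul_assoc]
  · rintro a ⟨ha1, ha2⟩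
    refine ⟨⟨?_, ?_⟩, hstar a⟩
    · rw [conjTranspose_conjTranspose, hstar, conjTranspose_conjTranspose, ha2]
    · rw [conjTranspose_conjTranspose, hstar, conjTranspose_conjTranspose, ha1]
end

section
/- Monotonicity of the trace norm under trace-preserving positive maps in the hypothesis-testing form: if T : A → B is a positive trace-preserving linear map such that T* is subunital, then for all density operators σ, ρ ∈ A and t ≥ 0, ‖T(σ) − t T(ρ)‖₁ ≤ ‖σ − tρ‖₁. -/
open Matrix ComplexOrder


private lemma psdTraceNonneg {k : Type*} [Fintype k] [DecidableEq k] {A : Matrix k k ℂ}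
    (hA : A.PosSemidef) : 0 ≤ A.trace := by
  rw [Matrix.trace]
  apply Finset.sum_nonneg
  intro i _
  exact hA.diag_nonneg

private lemma psdTraceMulNonneg {k : Type*} [Fintype k] [DecidableEq k] {A B : Matrix k k ℂ}
    (hA : A.PosSemidef) (hB : B.PosSemidef) : 0 ≤ (A * B).trace := by
  obtain ⟨C, hC⟩ : ∃ C : Matrix k k ℂ, A = Cᴴ * C := by
    open scoped MatrixOrder in exact CStarAlgebra.nonneg_iff_eq_star_mul_self.mp hA.nonneg
  have h1 : (A * B).trace = (C * B * Cᴴ).trace := by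
    rw [Matrix.trace_mul_cycle, hC, mul_assoc]
  rw [h1]
  exact psdTraceNonneg (hB.mul_mul_conjTranspose_same C)

section spec
variable {k : Type*} [Fintype k] [DecidableEq k] {A : Matrix k k ℂ} (hA : A.IsHermitian)

noncomputable def Mc (d : k → ℂ) : Matrix k k ℂ :=
  (hA.eigenvectorUnitary : Matrix k k ℂ) * Matrix.diagonal d *
    star (hA.eigenvectorUnitary : Matrix k k ℂ)

lemma Mc_trace (d : k → ℂ) : (Mc hA d).trace = ∑ i, d i := by
  rw [Mc, Matrix.trace_mul_cycle, Unitary.coe_star_mul_self, one_mul, Matrix.trace_diagonal]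

lemma Mc_mul (d e : k → ℂ) : Mc hA d * Mc hA e = Mc hA (fun i => d i * e i) := by
  have h : star (hA.eigenvectorUnitary : Matrix k k ℂ) *
      (hA.eigenvectorUnitary : Matrix k k ℂ) = 1 := Unitary.coe_star_mul_self _
  rw [Mc, Mc, Mc, ← Matrix.diagonal_mul_diagonal]
  calc (hA.eigenvectorUnitary : Matrix k k ℂ) * Matrix.diagonal d *
      star (hA.eigenvectorUnitary : Matrix k k ℂ) *
      ((hA.eigenvectorUnitary : Matrix k k ℂ) * Matrix.diagonal e *
      star (hA.eigenvectorUnitary : Matrix k k ℂ))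
      = (hA.eigenvectorUnitary : Matrix k k ℂ) * Matrix.diagonal d *
        (star (hA.eigenvectorUnitary : Matrix k k ℂ) *
        (hA.eigenvectorUnitary : Matrix k k ℂ)) * Matrix.diagonal e *
        star (hA.eigenvectorUnitary : Matrix k k ℂ) := by
        simp only [mul_assoc]
    _ = _ := by rw [h, mul_one, mul_assoc _ (Matrix.diagonal d)]

lemma Mc_add (d e : k → ℂ) : Mc hA d + Mc hA e = Mc hA (fun i => d i + e i) := by
  rw [Mc, Mc, Mc, ← Matrix.diagonal_add, mul_add, add_mul]

lemma Mc_posSemidef {d : k → ℝ} (hd : ∀ i, 0 ≤ d i) :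
    (Mc hA (fun i => (d i : ℂ))).PosSemidef := by
  have h : (Matrix.diagonal (fun i => (d i : ℂ))).PosSemidef :=
    Matrix.posSemidef_diagonal_iff.mpr fun i => Complex.zero_le_real.mpr (hd i)
  have h2 := h.mul_mul_conjTranspose_same (hA.eigenvectorUnitary : Matrix k k ℂ)
  rw [← Matrix.star_eq_conjTranspose] at h2
  exact h2

lemma Mc_eigen : A = Mc hA (fun i => (hA.eigenvalues i : ℂ)) := hA.spectral_theorem

end spec

private lemma absid (a : ℝ) : |a| = 2 * max a 0 - a := by
  rcases le_total a 0 with h | h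
  · rw [abs_of_nonpos h, max_eq_right h]; ring
  · rw [abs_of_nonneg h, max_eq_left h]; ring

/-- Monotonicity of the trace norm under positive trace-preserving
maps with subunital adjoint: for density operators `σ, ρ` and `t ≥ 0`,
`‖T σ - t • T ρ‖₁ ≤ ‖σ - t • ρ‖₁`, where the trace norm of a Hermitian matrix
is the sum of the absolute values of its eigenvalues. -/
theorem stmt18 {n m : Type*} [Fintype n] [DecidableEq n] [Fintype m] [DecidableEq m]
    (T : Matrix n n ℂ →ₗ[ℂ] Matrix m m ℂ) (Tstar : Matrix m m ℂ →ₗ[ℂ] Matrix n n ℂ)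
    (hpos : ∀ a : Matrix n n ℂ, a.PosSemidef → (T a).PosSemidef)
    (hadj : ∀ (a : Matrix n n ℂ) (b : Matrix m m ℂ),
      ((T a)ᴴ * b).trace = (aᴴ * Tstar b).trace)
    (hsub : ((1 : Matrix n n ℂ) - Tstar 1).PosSemidef)
    (htp : ∀ a : Matrix n n ℂ, (T a).trace = a.trace)
    (σ ρ : Matrix n n ℂ) (hσ : σ.PosSemidef) (hσ1 : σ.trace = 1)
    (hρ : ρ.PosSemidef) (hρ1 : ρ.trace = 1)
    (t : ℝ) (ht : 0 ≤ t)
    (hx : (σ - (t : ℂ) • ρ).IsHermitian)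
    (hy : (T σ - (t : ℂ) • T ρ).IsHermitian) :
    ∑ i, |hy.eigenvalues i| ≤ ∑ i, |hx.eigenvalues i| := by
  set x : Matrix n n ℂ := σ - (t : ℂ) • ρ with hxdef
  set y : Matrix m m ℂ := T σ - (t : ℂ) • T ρ with hydef
  have hTx : T x = y := by rw [hxdef, hydef, map_sub, LinearMap.map_smul]
  set lam : n → ℝ := hx.eigenvalues with hlam
  set mu : m → ℝ := hy.eigenvalues with hmu
  -- positive / negative parts of x
  set p : n → ℝ := fun i => max (lam i) 0 with hp
  set q : n → ℝ := fun i => max (-lam i) 0 with hq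
  set xp : Matrix n n ℂ := Mc hx (fun i => (p i : ℂ)) with hxp
  set xm : Matrix n n ℂ := Mc hx (fun i => (q i : ℂ)) with hxm
  -- spectral projection of y onto positive eigenvalues
  set e : m → ℝ := fun i => if 0 < mu i then 1 else 0 with he
  set P : Matrix m m ℂ := Mc hy (fun i => (e i : ℂ)) with hP
  set Q : Matrix m m ℂ := Mc hy (fun i => ((1 - e i : ℝ) : ℂ)) with hQ
  have hxp_psd : xp.PosSemidef := Mc_posSemidef hx fun i => le_max_right _ _
  have hxm_psd : xm.PosSemidef := Mc_posSemidef hx fun i => le_max_right _ _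
  have hP_psd : P.PosSemidef := Mc_posSemidef hy fun i => by
    rw [he]; positivity
  have hQ_psd : Q.PosSemidef := Mc_posSemidef hy fun i => by
    rw [he]; simp only [sub_nonneg]; split <;> norm_num
  -- x = xp - xm
  have hsplit : x = xp - xm := by
    have h1 : Mc hx (fun i => (lam i : ℂ)) + Mc hx (fun i => (q i : ℂ))
        = Mc hx (fun i => ((lam i : ℂ) + (q i : ℂ))) := Mc_add hx _ _
    have h2r : ∀ i, lam i + q i = p i := by
      intro i
      rw [hp, hq]
      rcases le_total (lam i) 0 with h | h
      · simp [max_eq_right h, max_eq_left (neg_nonneg.mpr h)]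
      · simp [max_eq_left h, max_eq_right (neg_nonpos.mpr h), h]
    have h2 : (fun i => ((lam i : ℂ) + (q i : ℂ))) = fun i => (p i : ℂ) := by
      funext i
      rw [← Complex.ofReal_add, h2r i]
    have h3 : x = Mc hx (fun i => (lam i : ℂ)) := Mc_eigen hx
    rw [h3, hxp, hxm, ← h2, ← h1, add_sub_cancel_right]
  -- P + Q = 1
  have hPQ : P + Q = 1 := by
    have h1 : P + Q = Mc hy (fun i => ((e i : ℂ) + ((1 - e i : ℝ) : ℂ))) := Mc_add hy _ _
    have h2 : (fun i => ((e i : ℂ) + ((1 - e i : ℝ) : ℂ))) = fun _ => (1 : ℂ) := by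
      funext i; push_cast; ring
    rw [h1, h2, Mc, ← Matrix.diagonal_one]
    have : Matrix.diagonal (fun _ : m => (1:ℂ)) = (1 : Matrix m m ℂ) := by
      rw [← Matrix.diagonal_one]
    rw [this, mul_one]
    exact Matrix.mem_unitaryGroup_iff.mp hy.eigenvectorUnitary.2
  -- trace identities
  have htr_yP : (y * P).trace = ((∑ i, max (mu i) 0 : ℝ) : ℂ) := by
    have h1 : y = Mc hy (fun i => (mu i : ℂ)) := Mc_eigen hy
    rw [h1, hP, Mc_mul, Mc_trace]
    push_cast
    congr 1
    funext i
    rw [he]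
    rcases lt_or_ge 0 (mu i) with h | h
    · simp [h, max_eq_left h.le]
    · simp [not_lt.mpr h, max_eq_right h]
  have htr_xp : xp.trace = ((∑ i, max (lam i) 0 : ℝ) : ℂ) := by
    rw [hxp, Mc_trace]; push_cast; rfl
  have htr_x : x.trace = ((∑ i, lam i : ℝ) : ℂ) := by
    rw [Mc_eigen hx, Mc_trace]; push_cast; rfl
  have htr_y : y.trace = ((∑ i, mu i : ℝ) : ℂ) := by
    rw [Mc_eigen hy, Mc_trace]; push_cast; rfl
  -- adjoint relations
  have adj_x : (y * P).trace = (x * Tstar P).trace := by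
    have := hadj x P
    rwa [hTx, hy.eq, hx.eq] at this
  have adj_xm : (xm * Tstar P).trace = ((T xm) * P).trace := by
    have := hadj xm P
    rw [(hpos xm hxm_psd).isHermitian.eq, hxm_psd.isHermitian.eq] at this
    exact this.symm
  have adj_xp : (xp * Tstar P).trace = ((T xp) * P).trace := by
    have := hadj xp P
    rw [(hpos xp hxp_psd).isHermitian.eq, hxp_psd.isHermitian.eq] at this
    exact this.symm
  -- nonnegativity facts
  have pos1 : 0 ≤ ((T xm) * P).trace := psdTraceMulNonneg (hpos xm hxm_psd) hP_psd
  have pos2 : 0 ≤ ((T xp) * Q).trace := psdTraceMulNonneg (hpos xp hxp_psd) hQ_psd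
  -- (T xp * P).trace ≤ xp.trace
  have key1 : ((T xp) * P).trace ≤ xp.trace := by
    have hsum : ((T xp) * P).trace + ((T xp) * Q).trace = (T xp).trace := by
      rw [← Matrix.trace_add, ← mul_add, hPQ, mul_one]
    have := htp xp
    calc ((T xp) * P).trace = (T xp).trace - ((T xp) * Q).trace := by
          rw [← hsum]; ring
      _ ≤ (T xp).trace := by
          have : (T xp).trace - ((T xp) * Q).trace ≤ (T xp).trace - 0 := by
            exact sub_le_sub_left pos2 _
          simpa using this
      _ = xp.trace := htp xp
  -- main chain
  have main : (y * P).trace ≤ xp.trace := by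
    calc (y * P).trace = (x * Tstar P).trace := adj_x
      _ = (xp * Tstar P).trace - (xm * Tstar P).trace := by
          rw [hsplit, sub_mul, Matrix.trace_sub]
      _ ≤ (xp * Tstar P).trace := by
          have : (xp * Tstar P).trace - (xm * Tstar P).trace
              ≤ (xp * Tstar P).trace - 0 := by
            rw [adj_xm]; exact sub_le_sub_left pos1 _
          simpa using this
      _ = ((T xp) * P).trace := adj_xp
      _ ≤ xp.trace := key1
  -- deduce real inequality on positive parts
  have hS : (∑ i, max (mu i) 0) ≤ ∑ i, max (lam i) 0 := by
    rw [htr_yP, htr_xp] at main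
    exact_mod_cast main
  -- equality of traces
  have hT : (∑ i, mu i) = ∑ i, lam i := by
    have : y.trace = x.trace := by rw [← hTx]; exact htp x
    rw [htr_y, htr_x] at this
    exact_mod_cast this
  calc ∑ i, |mu i| = ∑ i, (2 * max (mu i) 0 - mu i) := by
        exact Finset.sum_congr rfl fun i _ => absid _
    _ = 2 * (∑ i, max (mu i) 0) - ∑ i, mu i := by
        rw [Finset.sum_sub_distrib, Finset.mul_sum]
    _ ≤ 2 * (∑ i, max (lam i) 0) - ∑ i, lam i := by
        rw [hT]; linarith
    _ = ∑ i, (2 * max (lam i) 0 - lam i) := by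
        rw [Finset.sum_sub_distrib, Finset.mul_sum]
    _ = ∑ i, |lam i| := by
        exact Finset.sum_congr rfl fun i _ => (absid _).symm
end
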